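/- arXiv:2604.24097 — 2 statements merged into one kernel-verified Lean document; each statement's English description precedes it below -/
import Mathlib

section
/- Let p be an odd prime and let G = M(p,e,i) with generators a, b. A map θ defined on the generators by θ(a) = b^{m p^{e−i}} a^n and θ(b) = b^{1+r p^{e−i}} a^s, where 1 ≤ m, r ≤ p^i and 1 ≤ n, s ≤ p^e, extends to an automorphism of G if and only if p ∤ n; moreover, every automorphism of G arises this way. Consequently, |Aut(G)| = (p−1)·p^{2e+2i−1}. -/
open Subgroup Equiv
open scoped commutatorElement

namespace Beauville

variable {G : Type*} [Group G]

/-- `𝕋(G)`: generating triples with product 1. -/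
def TripleSet (G : Type*) [Group G] : Set (G × G × G) :=
  {t | Subgroup.closure {t.1, t.2.1} = ⊤ ∧ t.1 * t.2.1 * t.2.2 = 1}

lemma mem_tripleSet {x y z : G} :
    (x, y, z) ∈ TripleSet G ↔ Subgroup.closure {x, y} = ⊤ ∧ x * y * z = 1 := Iff.rfl

lemma closure_pair_top_of {x y u v : G} (h : Subgroup.closure {x, y} = ⊤)
    (hx : x ∈ Subgroup.closure {u, v}) (hy : y ∈ Subgroup.closure {u, v}) :
    Subgroup.closure ({u, v} : Set G) = ⊤ := by
  rw [eq_top_iff, ← h, Subgroup.closure_le]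
  intro g hg
  simp only [Set.mem_insert_iff, Set.mem_singleton_iff] at hg
  rcases hg with rfl | rfl
  · exact hx
  · exact hy

lemma mem_cp_left (u v : G) : u ∈ Subgroup.closure ({u, v} : Set G) :=
  Subgroup.subset_closure (Set.mem_insert _ _)

lemma mem_cp_right (u v : G) : v ∈ Subgroup.closure ({u, v} : Set G) :=
  Subgroup.subset_closure (Set.mem_insert_of_mem _ rfl)

lemma closure_pair_map_top (f : G ≃* G) {x y : G} (h : Subgroup.closure {x, y} = ⊤) :
    Subgroup.closure ({f x, f y} : Set G) = ⊤ := by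
  have himg : ({f x, f y} : Set G) = f.toMonoidHom '' {x, y} := (Set.image_pair _ _ _).symm
  rw [himg, ← MonoidHom.map_closure, h, ← MonoidHom.range_eq_map]
  simpa [MonoidHom.range_eq_top] using f.surjective

section Perms

/-- raw permutation `σ₁ : (x,y,z) ↦ (y,z,x)`. -/
def rotRaw : Equiv.Perm (G × G × G) where
  toFun t := (t.2.1, t.2.2, t.1)
  invFun t := (t.2.2, t.1, t.2.1)
  left_inv _ := rfl
  right_inv _ := rfl

@[simp] lemma rotRaw_apply (t : G × G × G) : rotRaw t = (t.2.1, t.2.2, t.1) := rfl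

lemma rotRaw_mem {t : G × G × G} (ht : t ∈ TripleSet G) : rotRaw t ∈ TripleSet G := by
  obtain ⟨x, y, z⟩ := t
  rw [mem_tripleSet] at ht
  obtain ⟨hc, hp⟩ := ht
  rw [rotRaw_apply]
  have hx : x = (y * z)⁻¹ := by
    rw [mul_assoc] at hp
    exact eq_inv_of_mul_eq_one_left hp
  refine mem_tripleSet.2 ⟨closure_pair_top_of hc ?_ ?_, ?_⟩
  · rw [hx]
    exact inv_mem (mul_mem (mem_cp_left _ _) (mem_cp_right _ _))
  · exact mem_cp_left _ _
  · rw [hx, mul_inv_cancel]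

lemma rotRaw_iff (t : G × G × G) : t ∈ TripleSet G ↔ rotRaw t ∈ TripleSet G :=
  ⟨fun h => rotRaw_mem h, fun h => by
    have h2 := rotRaw_mem (rotRaw_mem h)
    rwa [show rotRaw (rotRaw (rotRaw t)) = t by simp] at h2⟩

/-- `σ₁` as a permutation of `𝕋(G)`. -/
def sigma1T (G : Type*) [Group G] : Equiv.Perm (TripleSet G) :=
  rotRaw.subtypePerm fun t => (rotRaw_iff t).symm

/-- `σ₂ = σ₁ ∘ σ₁`, acting as `(x,y,z) ↦ (z,x,y)`. -/
def sigma2T (G : Type*) [Group G] : Equiv.Perm (TripleSet G) :=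
  sigma1T G * sigma1T G

/-- raw permutation `σ₃ : (x,y,z) ↦ (z,y,x^y)`. -/
def sigma3Raw : Equiv.Perm (G × G × G) where
  toFun t := (t.2.2, t.2.1, t.2.1⁻¹ * t.1 * t.2.1)
  invFun t := (t.2.1 * t.2.2 * t.2.1⁻¹, t.2.1, t.1)
  left_inv := by rintro ⟨x, y, z⟩; simp [mul_assoc]
  right_inv := by rintro ⟨x, y, z⟩; simp [mul_assoc]

@[simp] lemma sigma3Raw_apply (t : G × G × G) :
    sigma3Raw t = (t.2.2, t.2.1, t.2.1⁻¹ * t.1 * t.2.1) := rfl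

@[simp] lemma sigma3Raw_symm_apply (t : G × G × G) :
    sigma3Raw.symm t = (t.2.1 * t.2.2 * t.2.1⁻¹, t.2.1, t.1) := rfl

lemma sigma3Raw_mem {t : G × G × G} (ht : t ∈ TripleSet G) : sigma3Raw t ∈ TripleSet G := by
  obtain ⟨x, y, z⟩ := t
  rw [mem_tripleSet] at ht
  obtain ⟨hc, hp⟩ := ht
  have hz : z = (x * y)⁻¹ := eq_inv_of_mul_eq_one_right hp
  rw [sigma3Raw_apply]
  refine mem_tripleSet.2 ⟨closure_pair_top_of hc ?_ ?_, ?_⟩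
  · have hxe : x = z⁻¹ * y⁻¹ := by rw [hz]; group
    rw [hxe]
    exact mul_mem (inv_mem (mem_cp_left _ _)) (inv_mem (mem_cp_right _ _))
  · exact mem_cp_right _ _
  · rw [hz]; group

lemma sigma3Raw_symm_mem {t : G × G × G} (ht : t ∈ TripleSet G) :
    sigma3Raw.symm t ∈ TripleSet G := by
  obtain ⟨x, y, z⟩ := t
  rw [mem_tripleSet] at ht
  obtain ⟨hc, hp⟩ := ht
  have hz : z = (x * y)⁻¹ := eq_inv_of_mul_eq_one_right hp
  rw [sigma3Raw_symm_apply]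
  refine mem_tripleSet.2 ⟨closure_pair_top_of hc ?_ ?_, ?_⟩
  · have hxe : x = y⁻¹ * (y * z * y⁻¹)⁻¹ := by rw [hz]; group
    rw [hxe]
    exact mul_mem (inv_mem (mem_cp_right _ _)) (inv_mem (mem_cp_left _ _))
  · exact mem_cp_right _ _
  · rw [hz]; group

lemma sigma3Raw_iff (t : G × G × G) : t ∈ TripleSet G ↔ sigma3Raw t ∈ TripleSet G :=
  ⟨fun h => sigma3Raw_mem h, fun h => by
    have h2 := sigma3Raw_symm_mem h
    rwa [Equiv.symm_apply_apply] at h2⟩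

/-- `σ₃` as a permutation of `𝕋(G)`. -/
def sigma3T (G : Type*) [Group G] : Equiv.Perm (TripleSet G) :=
  sigma3Raw.subtypePerm fun t => (sigma3Raw_iff t).symm

/-- raw permutation `σ₄ : (x,y,z) ↦ (y,x,z^x)`. -/
def sigma4Raw : Equiv.Perm (G × G × G) where
  toFun t := (t.2.1, t.1, t.1⁻¹ * t.2.2 * t.1)
  invFun t := (t.2.1, t.1, t.2.1 * t.2.2 * t.2.1⁻¹)
  left_inv := by rintro ⟨x, y, z⟩; simp [mul_assoc]
  right_inv := by rintro ⟨x, y, z⟩; simp [mul_assoc]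

@[simp] lemma sigma4Raw_apply (t : G × G × G) :
    sigma4Raw t = (t.2.1, t.1, t.1⁻¹ * t.2.2 * t.1) := rfl

@[simp] lemma sigma4Raw_symm_apply (t : G × G × G) :
    sigma4Raw.symm t = (t.2.1, t.1, t.2.1 * t.2.2 * t.2.1⁻¹) := rfl

lemma sigma4Raw_mem {t : G × G × G} (ht : t ∈ TripleSet G) : sigma4Raw t ∈ TripleSet G := by
  obtain ⟨x, y, z⟩ := t
  rw [mem_tripleSet] at ht
  obtain ⟨hc, hp⟩ := ht
  have hz : z = (x * y)⁻¹ := eq_inv_of_mul_eq_one_right hp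
  rw [sigma4Raw_apply]
  refine mem_tripleSet.2 ⟨closure_pair_top_of hc ?_ ?_, ?_⟩
  · exact mem_cp_right _ _
  · exact mem_cp_left _ _
  · rw [hz]; group

lemma sigma4Raw_symm_mem {t : G × G × G} (ht : t ∈ TripleSet G) :
    sigma4Raw.symm t ∈ TripleSet G := by
  obtain ⟨x, y, z⟩ := t
  rw [mem_tripleSet] at ht
  obtain ⟨hc, hp⟩ := ht
  have hz : z = (x * y)⁻¹ := eq_inv_of_mul_eq_one_right hp
  rw [sigma4Raw_symm_apply]
  refine mem_tripleSet.2 ⟨closure_pair_top_of hc ?_ ?_, ?_⟩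
  · exact mem_cp_right _ _
  · exact mem_cp_left _ _
  · rw [hz]; group

lemma sigma4Raw_iff (t : G × G × G) : t ∈ TripleSet G ↔ sigma4Raw t ∈ TripleSet G :=
  ⟨fun h => sigma4Raw_mem h, fun h => by
    have h2 := sigma4Raw_symm_mem h
    rwa [Equiv.symm_apply_apply] at h2⟩

/-- `σ₄` as a permutation of `𝕋(G)`. -/
def sigma4T (G : Type*) [Group G] : Equiv.Perm (TripleSet G) :=
  sigma4Raw.subtypePerm fun t => (sigma4Raw_iff t).symm

/-- raw permutation `σ₅ : (x,y,z) ↦ (x,z,y^z)`. -/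
def sigma5Raw : Equiv.Perm (G × G × G) where
  toFun t := (t.1, t.2.2, t.2.2⁻¹ * t.2.1 * t.2.2)
  invFun t := (t.1, t.2.1 * t.2.2 * t.2.1⁻¹, t.2.1)
  left_inv := by rintro ⟨x, y, z⟩; simp [mul_assoc]
  right_inv := by rintro ⟨x, y, z⟩; simp [mul_assoc]

@[simp] lemma sigma5Raw_apply (t : G × G × G) :
    sigma5Raw t = (t.1, t.2.2, t.2.2⁻¹ * t.2.1 * t.2.2) := rfl

@[simp] lemma sigma5Raw_symm_apply (t : G × G × G) :
    sigma5Raw.symm t = (t.1, t.2.1 * t.2.2 * t.2.1⁻¹, t.2.1) := rfl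

lemma sigma5Raw_mem {t : G × G × G} (ht : t ∈ TripleSet G) : sigma5Raw t ∈ TripleSet G := by
  obtain ⟨x, y, z⟩ := t
  rw [mem_tripleSet] at ht
  obtain ⟨hc, hp⟩ := ht
  have hz : z = (x * y)⁻¹ := eq_inv_of_mul_eq_one_right hp
  rw [sigma5Raw_apply]
  refine mem_tripleSet.2 ⟨closure_pair_top_of hc ?_ ?_, ?_⟩
  · exact mem_cp_left _ _
  · have hye : y = x⁻¹ * z⁻¹ := by rw [hz]; group
    rw [hye]
    exact mul_mem (inv_mem (mem_cp_left _ _)) (inv_mem (mem_cp_right _ _))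
  · rw [hz]; group

lemma sigma5Raw_symm_mem {t : G × G × G} (ht : t ∈ TripleSet G) :
    sigma5Raw.symm t ∈ TripleSet G := by
  obtain ⟨x, y, z⟩ := t
  rw [mem_tripleSet] at ht
  obtain ⟨hc, hp⟩ := ht
  have hz : z = (x * y)⁻¹ := eq_inv_of_mul_eq_one_right hp
  rw [sigma5Raw_symm_apply]
  refine mem_tripleSet.2 ⟨closure_pair_top_of hc ?_ ?_, ?_⟩
  · exact mem_cp_left _ _
  · have hv : y * z * y⁻¹ = x⁻¹ * y⁻¹ := by rw [hz]; group
    rw [hv]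
    have h2 : (x * (x⁻¹ * y⁻¹))⁻¹ ∈ Subgroup.closure ({x, x⁻¹ * y⁻¹} : Set G) :=
      inv_mem (mul_mem (mem_cp_left _ _) (mem_cp_right _ _))
    simpa using h2
  · rw [hz]; group

lemma sigma5Raw_iff (t : G × G × G) : t ∈ TripleSet G ↔ sigma5Raw t ∈ TripleSet G :=
  ⟨fun h => sigma5Raw_mem h, fun h => by
    have h2 := sigma5Raw_symm_mem h
    rwa [Equiv.symm_apply_apply] at h2⟩

/-- `σ₅` as a permutation of `𝕋(G)`. -/
def sigma5T (G : Type*) [Group G] : Equiv.Perm (TripleSet G) :=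
  sigma5Raw.subtypePerm fun t => (sigma5Raw_iff t).symm

end Perms


/-- Evaluation of a word in two letters at a pair of group elements. -/
def wordEval (w : FreeGroup Bool) (x y : G) : G :=
  FreeGroup.lift (fun b => bif b then x else y) w

lemma wordEval_conj (w : FreeGroup Bool) (x y c : G) :
    wordEval w (c⁻¹ * x * c) (c⁻¹ * y * c) = c⁻¹ * wordEval w x y * c := by
  have key : FreeGroup.lift (fun b => bif b then c⁻¹ * x * c else c⁻¹ * y * c) =
      ((MulAut.conj c⁻¹).toMonoidHom.comp (FreeGroup.lift (fun b => bif b then x else y))) := by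
    apply FreeGroup.ext_hom
    intro b
    cases b <;> simp [MulAut.conj_apply, mul_assoc]
  unfold wordEval
  rw [key]
  simp [MulAut.conj_apply, mul_assoc]

/-- Conjugation of a triple by a group element (`t^c`). -/
def conjTriple (c : G) (t : G × G × G) : G × G × G :=
  (c⁻¹ * t.1 * c, c⁻¹ * t.2.1 * c, c⁻¹ * t.2.2 * c)

lemma conjTriple_conjTriple (c d : G) (t : G × G × G) :
    conjTriple d (conjTriple c t) = conjTriple (c * d) t := by
  simp [conjTriple, mul_assoc]

@[simp] lemma conjTriple_one (t : G × G × G) : conjTriple 1 t = t := by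
  simp [conjTriple]

lemma conjTriple_mem (c : G) {t : G × G × G} (ht : t ∈ TripleSet G) :
    conjTriple c t ∈ TripleSet G := by
  obtain ⟨x, y, z⟩ := t
  rw [mem_tripleSet] at ht
  obtain ⟨hc, hp⟩ := ht
  refine mem_tripleSet.2 ⟨?_, ?_⟩
  · have h1 : (c⁻¹ * x * c : G) = (MulAut.conj c⁻¹ : G ≃* G) x := by
      simp [MulAut.conj_apply]
    have h2 : (c⁻¹ * y * c : G) = (MulAut.conj c⁻¹ : G ≃* G) y := by
      simp [MulAut.conj_apply]
    rw [h1, h2]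
    exact closure_pair_map_top _ hc
  · have : c⁻¹ * x * c * (c⁻¹ * y * c) * (c⁻¹ * z * c) = c⁻¹ * (x * y * z) * c := by group
    rw [this, hp]
    group

/-- The raw permutation `β_w : t ↦ t^{w(x,y)}`. -/
def betaRaw (w : FreeGroup Bool) : Equiv.Perm (G × G × G) where
  toFun t := conjTriple (wordEval w t.1 t.2.1) t
  invFun t := conjTriple (wordEval w t.1 t.2.1)⁻¹ t
  left_inv := by
    rintro ⟨x, y, z⟩
    have h1 : wordEval w (conjTriple (wordEval w x y) (x, y, z)).1
        (conjTriple (wordEval w x y) (x, y, z)).2.1 = wordEval w x y := by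
      show wordEval w ((wordEval w x y)⁻¹ * x * wordEval w x y)
          ((wordEval w x y)⁻¹ * y * wordEval w x y) = _
      rw [wordEval_conj]
      group
    show conjTriple _ (conjTriple (wordEval w x y) (x, y, z)) = (x, y, z)
    rw [h1, conjTriple_conjTriple, mul_inv_cancel, conjTriple_one]
  right_inv := by
    rintro ⟨x, y, z⟩
    have h1 : wordEval w (conjTriple (wordEval w x y)⁻¹ (x, y, z)).1
        (conjTriple (wordEval w x y)⁻¹ (x, y, z)).2.1 = wordEval w x y := by
      show wordEval w ((wordEval w x y)⁻¹⁻¹ * x * (wordEval w x y)⁻¹)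
          ((wordEval w x y)⁻¹⁻¹ * y * (wordEval w x y)⁻¹) = _
      rw [wordEval_conj]
      group
    show conjTriple _ (conjTriple (wordEval w x y)⁻¹ (x, y, z)) = (x, y, z)
    rw [h1, conjTriple_conjTriple, inv_mul_cancel, conjTriple_one]

lemma betaRaw_iff (w : FreeGroup Bool) (t : G × G × G) :
    t ∈ TripleSet G ↔ betaRaw w t ∈ TripleSet G := by
  constructor
  · intro h
    exact conjTriple_mem _ h
  · intro h
    have h2 : (betaRaw w).symm (betaRaw w t) ∈ TripleSet G := conjTriple_mem _ h
    rwa [Equiv.symm_apply_apply] at h2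

/-- `β_w` as a permutation of `𝕋(G)`. -/
def betaT (G : Type*) [Group G] (w : FreeGroup Bool) : Equiv.Perm (TripleSet G) :=
  (betaRaw w).subtypePerm fun t => (betaRaw_iff w t).symm

/-- The raw diagonal action of an automorphism on triples. -/
def autRaw (α : MulAut G) : Equiv.Perm (G × G × G) :=
  Equiv.prodCongr (α : G ≃* G).toEquiv
    (Equiv.prodCongr (α : G ≃* G).toEquiv (α : G ≃* G).toEquiv)

@[simp] lemma autRaw_apply (α : MulAut G) (t : G × G × G) :
    autRaw α t = (α t.1, α t.2.1, α t.2.2) := rfl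

lemma autRaw_mem (α : MulAut G) {t : G × G × G} (ht : t ∈ TripleSet G) :
    autRaw α t ∈ TripleSet G := by
  obtain ⟨x, y, z⟩ := t
  rw [mem_tripleSet] at ht
  obtain ⟨hc, hp⟩ := ht
  rw [autRaw_apply]
  refine mem_tripleSet.2 ⟨closure_pair_map_top (α : G ≃* G) hc, ?_⟩
  rw [← map_mul, ← map_mul, hp, map_one]

lemma autRaw_symm_apply (α : MulAut G) (t : G × G × G) :
    (autRaw α).symm t = autRaw α⁻¹ t := rfl

lemma autRaw_iff (α : MulAut G) (t : G × G × G) :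
    t ∈ TripleSet G ↔ autRaw α t ∈ TripleSet G := by
  constructor
  · exact fun h => autRaw_mem α h
  · intro h
    have h2 := autRaw_mem α⁻¹ h
    rw [← autRaw_symm_apply, Equiv.symm_apply_apply] at h2
    exact h2

/-- `α̃`, the diagonal action of an automorphism on `𝕋(G)`. -/
def dAutT (α : MulAut G) : Equiv.Perm (TripleSet G) :=
  (autRaw α).subtypePerm fun t => (autRaw_iff α t).symm

/-- `ι̃_g`, the diagonal action of the inner automorphism `ι_g` on `𝕋(G)`. -/
def dInnT (g : G) : Equiv.Perm (TripleSet G) :=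
  dAutT (MulAut.conj g)

/-- `J(G) = {β_w : w a word in two letters}`. -/
def JSet (G : Type*) [Group G] : Set (Equiv.Perm (TripleSet G)) :=
  Set.range (betaT G)

/-- The subgroup `⟨σ₁, σ₄⟩` of `Sym(𝕋(G))`. -/
def SS14 (G : Type*) [Group G] : Subgroup (Equiv.Perm (TripleSet G)) :=
  Subgroup.closure {sigma1T G, sigma4T G}

/-- `I(G) = ⟨DInn(G), σ₁, σ₂, σ₃, σ₄, σ₅⟩`. -/
def IGroup (G : Type*) [Group G] : Subgroup (Equiv.Perm (TripleSet G)) :=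
  Subgroup.closure (Set.range (dInnT (G := G)) ∪
    {sigma1T G, sigma2T G, sigma3T G, sigma4T G, sigma5T G})


/-- `Σ(x,y)`: the union of all conjugates of `⟨x⟩`, `⟨y⟩` and `⟨x*y⟩`. -/
def sigmaSet (x y : G) : Set G :=
  ⋃ g : G, (fun h => g * h * g⁻¹) ''
    ((Subgroup.zpowers x : Set G) ∪ (Subgroup.zpowers y : Set G) ∪
      (Subgroup.zpowers (x * y) : Set G))

/-- An (unmixed) Beauville structure for `G`. -/
def IsBeauvilleStructure (t : (G × G × G) × (G × G × G)) : Prop :=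
  ∃ x₁ y₁ x₂ y₂ : G,
    t = ((x₁, y₁, (x₁ * y₁)⁻¹), (x₂, y₂, (x₂ * y₂)⁻¹)) ∧
    Subgroup.closure {x₁, y₁} = ⊤ ∧ Subgroup.closure {x₂, y₂} = ⊤ ∧
    sigmaSet x₁ y₁ ∩ sigmaSet x₂ y₂ = {1}

/-- `𝕌(G)`, the set of all Beauville structures for `G`, as a subset of `G³ × G³`. -/
def beauvilleStructures (G : Type*) [Group G] : Set ((G × G × G) × (G × G × G)) :=
  {t | IsBeauvilleStructure t}

/-- A Beauville group is a group admitting a Beauville structure. -/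
def IsBeauvilleGroup (G : Type*) [Group G] : Prop :=
  ∃ t : (G × G × G) × (G × G × G), IsBeauvilleStructure t

/-- A metacyclic group: it has a cyclic normal subgroup with cyclic quotient. -/
def IsMetacyclic (G : Type*) [Group G] : Prop :=
  ∃ (N : Subgroup G) (hN : N.Normal), IsCyclic N ∧
    (haveI := hN; IsCyclic (G ⧸ N))

/-- `𝕌(G)` viewed as a subset of `𝕋(G) × 𝕋(G)`. -/
def USet (G : Type*) [Group G] : Set (TripleSet G × TripleSet G) :=
  {t | IsBeauvilleStructure ((t.1 : G × G × G), (t.2 : G × G × G))}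

/-- Generators of `B(G)`: the permutations of `𝕌(G)` induced by the componentwise action
of `I(G) × I(G)` and by the diagonal action of `Aut(G)`. -/
def BGens (G : Type*) [Group G] : Set (Equiv.Perm (USet G)) :=
  {π | ∃ ρ₁ ∈ IGroup G, ∃ ρ₂ ∈ IGroup G,
      ∀ t : USet G, ((π t : TripleSet G × TripleSet G)) = (ρ₁ (t : TripleSet G × TripleSet G).1, ρ₂ (t : TripleSet G × TripleSet G).2)} ∪
  {π | ∃ α : MulAut G,
      ∀ t : USet G, ((π t : TripleSet G × TripleSet G)) = (dAutT α (t : TripleSet G × TripleSet G).1, dAutT α (t : TripleSet G × TripleSet G).2)}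

/-- The permutation(s) of `𝕌(G)` exchanging the two triples. -/
def tauGens (G : Type*) [Group G] : Set (Equiv.Perm (USet G)) :=
  {π | ∀ t : USet G, ((π t : TripleSet G × TripleSet G)) =
      ((t : TripleSet G × TripleSet G).2, (t : TripleSet G × TripleSet G).1)}

/-- `B(G)`, the subgroup of `Sym(𝕌(G))` generated by the action of `I(G) × I(G)`
and the diagonal action of `Aut(G)`. -/
def BGroup (G : Type*) [Group G] : Subgroup (Equiv.Perm (USet G)) :=
  Subgroup.closure (BGens G)

/-- `A_𝕌(G) = ⟨B(G), τ⟩`. -/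
def AUGroup (G : Type*) [Group G] : Subgroup (Equiv.Perm (USet G)) :=
  Subgroup.closure (BGens G ∪ tauGens G)


/-- The subgroup of `G` generated by all `n`-th powers. -/
def powSubgroup (G : Type*) [Group G] (n : ℕ) : Subgroup G :=
  Subgroup.closure (Set.range fun g : G => g ^ n)

/-- The subgroup of inner automorphisms, `Inn(G)`. -/
def innAut (G : Type*) [Group G] : Subgroup (MulAut G) :=
  (MulAut.conj : G →* MulAut G).range

instance innAut_normal (G : Type*) [Group G] : (innAut G).Normal := by
  constructor
  rintro - ⟨g, rfl⟩ α
  refine ⟨α g, ?_⟩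
  ext x
  simp only [MulAut.conj_apply, MulAut.mul_apply, MulAut.inv_def, map_mul, map_inv,
    MulEquiv.apply_symm_apply]

section Presented

/-- The two generators of the free group on two letters. -/
def fA : FreeGroup Bool := FreeGroup.of true

def fB : FreeGroup Bool := FreeGroup.of false

/-- Relations of `M(p,e,i) = ⟨a,b ∣ a^{p^e} = b^{p^e} = 1, [a,b] = a^{p^i}⟩`. -/
def MRels (p e i : ℕ) : Set (FreeGroup Bool) :=
  {fA ^ p ^ e, fB ^ p ^ e, ⁅fA, fB⁆ * (fA ^ p ^ i)⁻¹}

/-- The metacyclic group `M(p,e,i)`. -/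
abbrev MGroup (p e i : ℕ) : Type := PresentedGroup (MRels p e i)

def ma (p e i : ℕ) : MGroup p e i := PresentedGroup.of true

def mb (p e i : ℕ) : MGroup p e i := PresentedGroup.of false

/-- Relations of
`H(p,e,i,j,k) = ⟨a,b ∣ a^{p^e} = [b,a]^{p^j} = [b,a,a] = [b,a,b] = 1, b^{p^i} = [b,a]^{p^k}⟩`. -/
def HRels (p e i j k : ℕ) : Set (FreeGroup Bool) :=
  {fA ^ p ^ e, ⁅fB, fA⁆ ^ p ^ j, ⁅⁅fB, fA⁆, fA⁆, ⁅⁅fB, fA⁆, fB⁆,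
    fB ^ p ^ i * (⁅fB, fA⁆ ^ p ^ k)⁻¹}

/-- The group `H(p,e,i,j,k)` of nilpotency class 2. -/
abbrev HGroup (p e i j k : ℕ) : Type := PresentedGroup (HRels p e i j k)

def ha (p e i j k : ℕ) : HGroup p e i j k := PresentedGroup.of true

def hb (p e i j k : ℕ) : HGroup p e i j k := PresentedGroup.of false

/-- Relations of
`K(p,e,j) = ⟨a,b ∣ a^{p^e} = b^{p^e} = [b,a]^{p^j} = [b,a,b] = [b,a,a] = 1⟩`. -/
def KRels (p e j : ℕ) : Set (FreeGroup Bool) :=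
  {fA ^ p ^ e, fB ^ p ^ e, ⁅fB, fA⁆ ^ p ^ j, ⁅⁅fB, fA⁆, fB⁆, ⁅⁅fB, fA⁆, fA⁆}

/-- The group `K(p,e,j)` of nilpotency class 2. -/
abbrev KGroup (p e j : ℕ) : Type := PresentedGroup (KRels p e j)

def ka (p e j : ℕ) : KGroup p e j := PresentedGroup.of true

def kb (p e j : ℕ) : KGroup p e j := PresentedGroup.of false

end Presented


namespace MAux


open Finset

lemma pow_one_add_pe {p : ℕ} {j : ℕ} (hj : 1 ≤ j) (w : ℤ) (k : ℕ) :
    ∃ wk : ℤ, (1 + (p:ℤ)^j * w)^k = 1 + (p:ℤ)^j * wk ∧ (p:ℤ) ∣ wk - k * w := by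
  induction k with
  | zero => exact ⟨0, by ring, by simp⟩
  | succ k ih =>
    obtain ⟨wk, h1, h2⟩ := ih
    refine ⟨wk + w + (p:ℤ)^j * wk * w, by rw [pow_succ, h1]; ring, ?_⟩
    have hpj : (p:ℤ) ∣ (p:ℤ)^j := dvd_pow_self _ (by omega)
    have : wk + w + (p:ℤ)^j * wk * w - (k+1 : ℕ) * w
        = (wk - k * w) + (p:ℤ)^j * (wk * w) := by push_cast; ring
    rw [this]
    exact dvd_add h2 (hpj.mul_right _)

lemma sum_range_id_dvd {p : ℕ} (hodd : Odd p) : (p:ℤ) ∣ ∑ k ∈ range p, (k:ℤ) := by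
  obtain ⟨t, ht⟩ := hodd
  have h2 : (∑ k ∈ range p, k) * 2 = p * (p - 1) := Finset.sum_range_id_mul_two p
  have hp1 : p - 1 = 2 * t := by omega
  have : (∑ k ∈ range p, k) * 2 = (p * t) * 2 := by rw [h2, hp1]; ring
  have hs : ∑ k ∈ range p, k = p * t := by omega
  have : ∑ k ∈ range p, (k:ℤ) = ((∑ k ∈ range p, k : ℕ) : ℤ) := by push_cast; rfl
  rw [this, hs]
  push_cast
  exact Dvd.intro _ rfl

lemma pow_p_one_add {p : ℕ} (hp : p.Prime) (hodd : Odd p) {j : ℕ} (hj : 1 ≤ j) (w : ℤ) :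
    ∃ w' : ℤ, (1 + (p:ℤ)^j * w)^p = 1 + (p:ℤ)^(j+1) * w' ∧ (p:ℤ) ∣ w' - w := by
  set z : ℤ := 1 + (p:ℤ)^j * w with hz
  choose W hW1 hW2 using pow_one_add_pe hj w
  have hS : ∑ k ∈ range p, z ^ k = p + (p:ℤ)^j * ∑ k ∈ range p, W k := by
    calc ∑ k ∈ range p, z ^ k = ∑ k ∈ range p, (1 + (p:ℤ)^j * W k) := by
          exact Finset.sum_congr rfl fun k _ => hW1 k
      _ = p + (p:ℤ)^j * ∑ k ∈ range p, W k := by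
          rw [Finset.sum_add_distrib, ← Finset.mul_sum]; simp
  have hdvd : (p:ℤ) ∣ ∑ k ∈ range p, W k := by
    have h1 : (p:ℤ) ∣ ∑ k ∈ range p, (W k - k * w) := Finset.dvd_sum fun k _ => hW2 k
    have h2 : (p:ℤ) ∣ (∑ k ∈ range p, (k:ℤ)) * w := (sum_range_id_dvd hodd).mul_right w
    have h3 : ∑ k ∈ range p, W k
        = (∑ k ∈ range p, (W k - k * w)) + (∑ k ∈ range p, (k:ℤ)) * w := by
      rw [Finset.sum_sub_distrib, Finset.sum_mul]; ring
    rw [h3]; exact dvd_add h1 h2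
  obtain ⟨m, hm⟩ := hdvd
  refine ⟨w * (1 + (p:ℤ)^j * m), ?_, ?_⟩
  · have hfac : z^p - 1 = (z - 1) * ∑ k ∈ range p, z^k := by rw [mul_comm, geom_sum_mul]
    have hz1 : z - 1 = (p:ℤ)^j * w := by rw [hz]; ring
    have : z^p - 1 = (p:ℤ)^(j+1) * (w * (1 + (p:ℤ)^j * m)) := by
      rw [hfac, hz1, hS, hm, pow_succ]; ring
    linarith [this]
  · have : w * (1 + (p:ℤ)^j * m) - w = (p:ℤ)^j * (w * m) := by ring
    rw [this]
    exact ((dvd_pow_self (p:ℤ) (by omega : j ≠ 0))).mul_right _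

lemma c_pow_pow {p : ℕ} (hp : p.Prime) (hodd : Odd p) {i : ℕ} (hi : 1 ≤ i) (k : ℕ) :
    ∃ w : ℤ, ((1:ℤ) - (p:ℤ)^i)^(p^k) = 1 + (p:ℤ)^(i+k) * w ∧ (p:ℤ) ∣ w + 1 := by
  induction k with
  | zero => exact ⟨-1, by push_cast; ring, by simp⟩
  | succ k ih =>
    obtain ⟨w, h1, h2⟩ := ih
    obtain ⟨w', g1, g2⟩ := pow_p_one_add hp hodd (by omega : 1 ≤ i + k) w
    refine ⟨w', ?_, ?_⟩
    · rw [pow_succ, pow_mul, h1, g1]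
      ring_nf
    · have h3 : w' + 1 = (w' - w) + (w + 1) := by ring
      rw [h3]; exact dvd_add g2 h2

lemma geom_sum_range_mul (z : ℤ) (a b : ℕ) :
    ∑ j ∈ range (a*b), z^j = (∑ j ∈ range a, z^j) * ∑ k ∈ range b, (z^a)^k := by
  induction b with
  | zero => simp
  | succ b ih =>
    rw [Nat.mul_succ, Finset.sum_range_add, ih, Finset.sum_range_succ, mul_add]
    congr 1
    rw [← pow_mul, Finset.sum_mul]
    refine Finset.sum_congr rfl fun j _ => ?_
    rw [← pow_add, Nat.add_comm]

lemma dvd_sub_one_of_dvd {p : ℕ} (z : ℤ) (hz : (p:ℤ) ∣ z - 1) (m : ℕ) :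
    (p:ℤ) ∣ z ^ m - 1 := by
  have h : z ^ m - 1 = (z - 1) * ∑ j ∈ range m, z^j := by rw [mul_comm, geom_sum_mul]
  rw [h]
  exact hz.mul_right _

lemma dvd_geom_sum {p : ℕ} (hp : p.Prime) (z : ℤ) (hz : (p:ℤ) ∣ z - 1) (e : ℕ) :
    ((p:ℤ)^e) ∣ ∑ j ∈ range (p^e), z^j := by
  induction e with
  | zero => simp
  | succ e ih =>
    have hre : p ^ (e+1) = p ^ e * p := pow_succ p e
    rw [hre, geom_sum_range_mul, pow_succ]
    refine mul_dvd_mul ih ?_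
    have hy : ∀ k : ℕ, (p:ℤ) ∣ (z^(p^e))^k - 1 := by
      intro k
      rw [← pow_mul]
      exact dvd_sub_one_of_dvd z hz _
    have h3 : ∑ k ∈ range p, (z^(p^e))^k - (p:ℤ) = ∑ k ∈ range p, ((z^(p^e))^k - 1) := by
      rw [Finset.sum_sub_distrib]; simp
    have h4 : (p:ℤ) ∣ ∑ k ∈ range p, (z^(p^e))^k - (p:ℤ) := by
      rw [h3]; exact Finset.dvd_sum fun k _ => hy k
    have := dvd_add h4 (dvd_refl (p:ℤ))
    simpa using this

open Finset

class MF (p e i : ℕ) : Prop where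
  hp : p.Prime
  hodd : Odd p
  h1 : 1 ≤ i
  hie : i < e

lemma hp' (p e i : ℕ) [MF p e i] : p.Prime := MF.hp (p := p) (e := e) (i := i)
lemma hodd' (p e i : ℕ) [MF p e i] : Odd p := MF.hodd (p := p) (e := e) (i := i)
lemma hi1 (p e i : ℕ) [MF p e i] : 1 ≤ i := MF.h1 (p := p) (e := e) (i := i)
lemma hie' (p e i : ℕ) [MF p e i] : i < e := MF.hie (p := p) (e := e) (i := i)
lemma p2 (p e i : ℕ) [MF p e i] : 2 ≤ p := (hp' p e i).two_le

lemma q1 (p e i : ℕ) [MF p e i] : 1 < p^e :=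
  Nat.one_lt_pow (by have := hie' p e i; omega) (p2 p e i)
def neZeroQ (p e i : ℕ) [MF p e i] : NeZero (p^e) := ⟨pow_ne_zero _ (hp' p e i).ne_zero⟩
def factQ (p e i : ℕ) [MF p e i] : Fact (1 < p^e) := ⟨q1 p e i⟩

section basic
variable (p e i : ℕ) [MF p e i]

/-- the multiplier `c = 1 - p^i`. -/
def cc : ZMod (p^e) := 1 - (p:ZMod (p^e))^i

lemma cc_int : (cc p e i) = (((1:ℤ) - (p:ℤ)^i : ℤ) : ZMod (p^e)) := by
  rw [cc]; push_cast; ring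

lemma cc_pow_t : (cc p e i)^(p^(e-i)) = 1 := by
  obtain ⟨w, h1, _⟩ := c_pow_pow (hp' p e i) (hodd' p e i) (hi1 p e i) (e-i)
  have hei : i + (e - i) = e := by have := hie' p e i; omega
  rw [cc_int, ← Int.cast_pow, h1, hei]
  have hz : ((p:ZMod (p^e)))^e = 0 := by rw [← Nat.cast_pow, ZMod.natCast_self]
  push_cast
  rw [hz]; ring

lemma cc_pow_q : (cc p e i)^(p^e) = 1 := by
  have h : p^e = p^(e-i) * p^i := by
    rw [← pow_add]; congr 1; have := hie' p e i; omega
  have h2 : (cc p e i)^(p^e) = ((cc p e i)^(p^(e-i)))^(p^i) := by rw [← pow_mul, ← h]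
  rw [h2, cc_pow_t, one_pow]

lemma cc_unit : IsUnit (cc p e i) := by
  have h := cc_pow_t p e i
  have hpos : 0 < p^(e-i) := pow_pos (by have := p2 p e i; omega) _
  have ht : p^(e-i) = (p^(e-i) - 1) + 1 := by omega
  refine IsUnit.of_mul_eq_one ((cc p e i)^(p^(e-i) - 1)) ?_
  rw [← pow_succ', ← ht, h]

/-- `c` as a unit. -/
noncomputable def uu : (ZMod (p^e))ˣ := (cc_unit p e i).unit

lemma uu_val : ((uu p e i : (ZMod (p^e))ˣ) : ZMod (p^e)) = cc p e i := IsUnit.unit_spec _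

lemma uu_pow_t : (uu p e i)^(p^(e-i)) = 1 := by
  apply Units.ext
  rw [Units.val_pow_eq_pow_val, uu_val, cc_pow_t, Units.val_one]

lemma orderOf_uu : orderOf (uu p e i) = p^(e-i) := by
  have hdvd : orderOf (uu p e i) ∣ p^(e-i) := orderOf_dvd_of_pow_eq_one (uu_pow_t p e i)
  obtain ⟨k, hk, hkeq⟩ := (Nat.dvd_prime_pow (hp' p e i)).mp hdvd
  rcases Nat.lt_or_ge k (e-i) with hlt | hge
  · exfalso
    have h1 : (uu p e i) ^ (p^(e-i-1)) = 1 := by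
      have h2 : p^(e-i-1) = p^k * p^(e-i-1-k) := by rw [← pow_add]; congr 1; omega
      rw [h2, pow_mul, ← hkeq, pow_orderOf_eq_one, one_pow]
    have hc1 : (cc p e i)^(p^(e-i-1)) = 1 := by
      have h3 := congrArg (fun u : (ZMod (p^e))ˣ => (u : ZMod (p^e))) h1
      simpa [Units.val_pow_eq_pow_val, uu_val] using h3
    obtain ⟨w, hw1, hw2⟩ := c_pow_pow (hp' p e i) (hodd' p e i) (hi1 p e i) (e-i-1)
    have hei : i + (e - i - 1) = e - 1 := by
      have := hie' p e i; have := hi1 p e i; omega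
    rw [hei] at hw1
    rw [cc_int, ← Int.cast_pow, hw1] at hc1
    have hdv : (((p:ℤ)^(e-1) * w : ℤ) : ZMod (p^e)) = 0 := by
      push_cast at hc1 ⊢
      linear_combination hc1
    rw [ZMod.intCast_zmod_eq_zero_iff_dvd, Nat.cast_pow] at hdv
    have hdv2 : ((p:ℤ)^(e-1) * (p:ℤ)) ∣ ((p:ℤ)^(e-1) * w) := by
      have he : e = (e-1) + 1 := by have := hie' p e i; omega
      have hpe : (p:ℤ)^(e-1) * (p:ℤ) = (p:ℤ)^e := by
        rw [← pow_succ]; congr 1; omega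
      rw [hpe]; exact hdv
    have hne : ((p:ℤ)^(e-1)) ≠ 0 := pow_ne_zero _ (by exact_mod_cast (hp' p e i).ne_zero)
    have hpw : (p:ℤ) ∣ w := (mul_dvd_mul_iff_left hne).mp hdv2
    have hone : (p:ℤ) ∣ 1 := by
      have h3 : (1:ℤ) = (w + 1) - w := by ring
      rw [h3]; exact dvd_sub hw2 hpw
    have := Int.le_of_dvd one_pos hone
    have := p2 p e i
    omega
  · have hke : k = e - i := le_antisymm hk hge
    rw [hkeq, hke]

lemma uu_pow_eq_one_iff (k : ℕ) : (uu p e i)^k = 1 ↔ p^(e-i) ∣ k := by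
  rw [← orderOf_uu p e i, orderOf_dvd_iff_pow_eq_one]

/-- `χ y = c ^ y.val`. -/
def chi (y : ZMod (p^e)) : ZMod (p^e) := (cc p e i)^y.val

lemma chi_add (y1 y2 : ZMod (p^e)) : chi p e i (y1 + y2) = chi p e i y1 * chi p e i y2 := by
  haveI := neZeroQ p e i
  rw [chi, chi, chi, ZMod.val_add, ← pow_eq_pow_mod _ (cc_pow_q p e i), pow_add]

lemma chi_zero : chi p e i 0 = 1 := by haveI := neZeroQ p e i; rw [chi, ZMod.val_zero, pow_zero]

lemma chi_neg_mul (y : ZMod (p^e)) : chi p e i (-y) * chi p e i y = 1 := by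
  rw [← chi_add, neg_add_cancel, chi_zero]

lemma chi_natCast (k : ℕ) : chi p e i ((k : ZMod (p^e))) = (cc p e i)^k := by
  haveI := neZeroQ p e i
  rw [chi, ZMod.val_natCast, ← pow_eq_pow_mod _ (cc_pow_q p e i)]

lemma chi_nsmul (k : ℕ) (y : ZMod (p^e)) :
    chi p e i ((k : ZMod (p^e)) * y) = (chi p e i y)^k := by
  induction k with
  | zero => simp [chi_zero]
  | succ k ih =>
    have h : ((k+1 : ℕ) : ZMod (p^e)) * y = (k : ZMod (p^e)) * y + y := by push_cast; ring
    rw [h, chi_add, ih, pow_succ]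

end basic

/-- The concrete model of `M(p,e,i)`. -/
@[ext]
structure McT (p e i : ℕ) where
  x : ZMod (p^e)
  y : ZMod (p^e)

namespace McT

variable (p e i : ℕ) [MF p e i]

instance : Mul (McT p e i) := ⟨fun v w => ⟨v.x + chi p e i v.y * w.x, v.y + w.y⟩⟩
instance : One (McT p e i) := ⟨⟨0, 0⟩⟩
instance : Inv (McT p e i) := ⟨fun v => ⟨-(chi p e i (-v.y)) * v.x, -v.y⟩⟩

@[simp] lemma mul_x (v w : McT p e i) : (v * w).x = v.x + chi p e i v.y * w.x := rfl
@[simp] lemma mul_y (v w : McT p e i) : (v * w).y = v.y + w.y := rfl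
@[simp] lemma one_x : (1 : McT p e i).x = 0 := rfl
@[simp] lemma one_y : (1 : McT p e i).y = 0 := rfl
@[simp] lemma inv_x (v : McT p e i) : (v⁻¹).x = -(chi p e i (-v.y)) * v.x := rfl
@[simp] lemma inv_y (v : McT p e i) : (v⁻¹).y = -v.y := rfl

instance : Group (McT p e i) :=
  Group.ofLeftAxioms
    (fun v w z => by
      ext
      · simp only [mul_x, mul_y, chi_add]; ring
      · simp [add_assoc])
    (fun v => by
      ext
      · simp [chi_zero]
      · simp)
    (fun v => by
      ext
      · simp only [mul_x, mul_y, inv_x, inv_y, one_x]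
        ring
      · simp)

end McT

open Finset Subgroup

section mc2
variable (p e i : ℕ) [MF p e i]

/-- generator `a` of the concrete model. -/
def av : McT p e i := ⟨1, 0⟩
/-- generator `b` of the concrete model. -/
def bv : McT p e i := ⟨0, 1⟩

lemma pow_xy (v : McT p e i) (k : ℕ) :
    (v^k).x = v.x * ∑ j ∈ range k, (chi p e i v.y)^j ∧ (v^k).y = (k : ZMod (p^e)) * v.y := by
  induction k with
  | zero => simp
  | succ k ih =>
    obtain ⟨hx, hy⟩ := ih
    constructor
    · rw [pow_succ, McT.mul_x, hx, hy, chi_nsmul, Finset.sum_range_succ]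
      ring
    · rw [pow_succ, McT.mul_y, hy]; push_cast; ring

lemma pow_x (v : McT p e i) (k : ℕ) :
    (v^k).x = v.x * ∑ j ∈ range k, (chi p e i v.y)^j := (pow_xy p e i v k).1

lemma pow_y (v : McT p e i) (k : ℕ) : (v^k).y = (k : ZMod (p^e)) * v.y := (pow_xy p e i v k).2

lemma av_pow (k : ℕ) : (av p e i)^k = ⟨(k : ZMod (p^e)), 0⟩ := by
  ext
  · rw [pow_x]
    show (1 : ZMod (p^e)) * ∑ j ∈ range k, (chi p e i 0)^j = _
    rw [chi_zero]
    simp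
  · rw [pow_y]
    show (k : ZMod (p^e)) * 0 = 0
    ring

lemma bv_pow (k : ℕ) : (bv p e i)^k = ⟨0, (k : ZMod (p^e))⟩ := by
  ext
  · rw [pow_x]
    show (0 : ZMod (p^e)) * _ = _
    ring
  · rw [pow_y]
    show (k : ZMod (p^e)) * 1 = _
    ring

lemma chi_eq_cast (y : ZMod (p^e)) :
    chi p e i y = (((1 - (p:ℤ)^i)^(y.val) : ℤ) : ZMod (p^e)) := by
  rw [chi, cc_int]; push_cast; ring

lemma pow_q_eq_one (v : McT p e i) : v^(p^e) = 1 := by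
  ext
  · rw [pow_x]
    have hdvd : ((p:ℤ)) ∣ (1 - (p:ℤ)^i)^(v.y.val) - 1 := by
      apply dvd_sub_one_of_dvd
      have : (1 - (p:ℤ)^i) - 1 = -((p:ℤ)^i) := by ring
      rw [this, dvd_neg]
      exact dvd_pow_self _ (by have := hi1 p e i; omega)
    have h := dvd_geom_sum (hp' p e i) _ hdvd e
    obtain ⟨m, hm⟩ := h
    have : ∑ j ∈ range (p^e), (chi p e i v.y)^j = 0 := by
      rw [chi_eq_cast]
      have hcast : ∑ j ∈ range (p^e), ((((1 - (p:ℤ)^i)^(v.y.val) : ℤ) : ZMod (p^e)))^j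
          = (((∑ j ∈ range (p^e), ((1 - (p:ℤ)^i)^(v.y.val))^j : ℤ)) : ZMod (p^e)) := by
        push_cast; rfl
      rw [hcast, hm]
      push_cast
      rw [show (((p:ZMod (p^e)))^e : ZMod (p^e)) = 0 by rw [← Nat.cast_pow, ZMod.natCast_self]]
      ring
    rw [this, mul_zero]
    rfl
  · rw [pow_y, ZMod.natCast_self, zero_mul]
    rfl

lemma comm_formula (v w : McT p e i) :
    v * w * v⁻¹ * w⁻¹ =
      ⟨v.x * (1 - chi p e i w.y) + (chi p e i v.y - 1) * w.x, 0⟩ := by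
  have h1 := chi_neg_mul p e i v.y
  have h2 := chi_neg_mul p e i w.y
  ext
  · simp only [McT.mul_x, McT.mul_y, McT.inv_x, McT.inv_y]
    rw [show v.y + w.y + -v.y = w.y by ring]
    rw [chi_add]
    linear_combination (-(chi p e i w.y) * v.x) * h1 - w.x * h2
  · simp only [McT.mul_x, McT.mul_y, McT.inv_x, McT.inv_y]
    ring

lemma chi_bv : chi p e i ((bv p e i).y) = cc p e i := by
  haveI := factQ p e i
  show chi p e i 1 = cc p e i
  rw [chi, ZMod.val_one, pow_one]

lemma comm_av_bv :
    (av p e i) * (bv p e i) * (av p e i)⁻¹ * (bv p e i)⁻¹ = (av p e i)^(p^i) := by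
  rw [comm_formula, av_pow]
  ext
  · show (av p e i).x * (1 - chi p e i (bv p e i).y) + (chi p e i (av p e i).y - 1) * (bv p e i).x
      = ((p^i : ℕ) : ZMod (p^e))
    rw [chi_bv]
    show (1 : ZMod (p^e)) * (1 - cc p e i) + (chi p e i 0 - 1) * 0 = _
    rw [chi_zero, cc]
    push_cast
    ring
  · rfl

/-- reduction mod `p`. -/
noncomputable def pi0 : ZMod (p^e) →+* ZMod p :=
  ZMod.castHom (dvd_pow_self p (by have := hie' p e i; omega)) (ZMod p)

lemma pi0_apply (x : ZMod (p^e)) : pi0 p e i x = ((x.val : ℕ) : ZMod p) := by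
  haveI := neZeroQ p e i
  rw [pi0, ZMod.castHom_apply, ← ZMod.natCast_val]

lemma pi0_zero_iff (x : ZMod (p^e)) : pi0 p e i x = 0 ↔ p ∣ x.val := by
  rw [pi0_apply, ZMod.natCast_eq_zero_iff]

end mc2

lemma val_cast_self' {n : ℕ} [NeZero n] (x : ZMod n) : ((x.val : ℕ) : ZMod n) = x := by
  simp [ZMod.natCast_val, ZMod.cast_id]

lemma isUnit_iff_val (p e i : ℕ) [MF p e i] (x : ZMod (p^e)) : IsUnit x ↔ ¬ p ∣ x.val := by
  haveI := neZeroQ p e i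
  conv_lhs => rw [← val_cast_self' x]
  rw [ZMod.isUnit_iff_coprime]
  rw [Nat.coprime_pow_right_iff (show 0 < e by have := hie' p e i; omega), Nat.coprime_comm]
  exact Nat.Prime.coprime_iff_not_dvd (hp' p e i)

section mc3
variable (p e i : ℕ) [MF p e i]

lemma isUnit_iff_pi0 (x : ZMod (p^e)) : IsUnit x ↔ pi0 p e i x ≠ 0 := by
  rw [isUnit_iff_val p e i]
  exact not_congr (pi0_zero_iff p e i x).symm

lemma pi0_cc : pi0 p e i (cc p e i) = 1 := by
  rw [cc]
  rw [map_sub, map_one, map_pow, map_natCast]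
  rw [ZMod.natCast_self, zero_pow (by have := hi1 p e i; omega), sub_zero]

lemma pi0_chi (y : ZMod (p^e)) : pi0 p e i (chi p e i y) = 1 := by
  rw [chi, map_pow, pi0_cc, one_pow]

/-- projection to the Frattini quotient. -/
noncomputable def piH : McT p e i →* Multiplicative (ZMod p × ZMod p) :=
  MonoidHom.mk' (fun v => Multiplicative.ofAdd (pi0 p e i v.x, pi0 p e i v.y))
    (fun v w => by
      simp only [McT.mul_x, McT.mul_y, map_add, map_mul, pi0_chi, one_mul, ← ofAdd_add,
        Prod.mk_add_mk])

lemma piH_apply (v : McT p e i) :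
    piH p e i v = Multiplicative.ofAdd (pi0 p e i v.x, pi0 p e i v.y) := rfl

end mc3
section gen
variable (p e i : ℕ) [MF p e i]

lemma not_gen_of_pi0_zero (A B : McT p e i)
    (hgen : Subgroup.closure ({A, B} : Set (McT p e i)) = ⊤)
    (hx : pi0 p e i A.x = 0) (hy : pi0 p e i A.y = 0) : False := by
  haveI : Fact p.Prime := ⟨hp' p e i⟩
  have hA1 : piH p e i A = 1 := by
    rw [piH_apply, hx, hy]; rfl
  have hmem : ∀ v : McT p e i, piH p e i v ∈ Subgroup.zpowers (piH p e i B) := by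
    intro v
    have h1 : v ∈ Subgroup.closure ({A, B} : Set (McT p e i)) := by
      rw [hgen]; exact Subgroup.mem_top v
    have h2 : piH p e i v ∈ Subgroup.map (piH p e i) (Subgroup.closure {A, B}) :=
      Subgroup.mem_map_of_mem _ h1
    rw [MonoidHom.map_closure, Set.image_pair, hA1] at h2
    have h3 : Subgroup.closure ({1, piH p e i B} : Set (Multiplicative (ZMod p × ZMod p)))
        ≤ Subgroup.zpowers (piH p e i B) := by
      rw [Subgroup.closure_le]
      rintro g hg
      rcases hg with rfl | rfl
      · exact Subgroup.one_mem _
      · exact Subgroup.mem_zpowers _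
    exact h3 h2
  obtain ⟨k, hk⟩ := hmem (av p e i)
  obtain ⟨l, hl⟩ := hmem (bv p e i)
  have hav : piH p e i (av p e i) = Multiplicative.ofAdd (1, 0) := by
    rw [piH_apply]
    show Multiplicative.ofAdd (pi0 p e i 1, pi0 p e i 0) = _
    rw [map_one, map_zero]
  have hbv : piH p e i (bv p e i) = Multiplicative.ofAdd (0, 1) := by
    rw [piH_apply]
    show Multiplicative.ofAdd (pi0 p e i 0, pi0 p e i 1) = _
    rw [map_one, map_zero]
  rw [hav] at hk
  rw [hbv] at hl
  rw [piH_apply] at hk hl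
  simp only at hk hl
  set Bx := pi0 p e i B.x
  set By := pi0 p e i B.y
  have hk' : (k : ZMod p) * Bx = 1 ∧ (k : ZMod p) * By = 0 := by
    have := congrArg Multiplicative.toAdd hk
    rw [← ofAdd_zsmul, toAdd_ofAdd, toAdd_ofAdd, Prod.smul_mk] at this
    constructor
    · rw [← zsmul_eq_mul]; exact congrArg Prod.fst this
    · rw [← zsmul_eq_mul]; exact congrArg Prod.snd this
  have hl' : (l : ZMod p) * By = 1 := by
    have := congrArg Multiplicative.toAdd hl
    rw [← ofAdd_zsmul, toAdd_ofAdd, toAdd_ofAdd, Prod.smul_mk] at this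
    rw [← zsmul_eq_mul]; exact congrArg Prod.snd this
  have hBy : By = 0 := by
    rcases mul_eq_zero.mp hk'.2 with h | h
    · exfalso
      have := hk'.1
      rw [h, zero_mul] at this
      exact zero_ne_one this
    · exact h
  rw [hBy, mul_zero] at hl'
  exact zero_ne_one hl'

lemma closure_pair_eq_top' (A B : McT p e i) (hAx : IsUnit A.x) (hAy : p ∣ A.y.val)
    (hBy : IsUnit B.y) : Subgroup.closure ({A, B} : Set (McT p e i)) = ⊤ := by
  haveI := neZeroQ p e i
  set H := Subgroup.closure ({A, B} : Set (McT p e i)) with hH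
  have hA : A ∈ H := Subgroup.subset_closure (Set.mem_insert _ _)
  have hB : B ∈ H := Subgroup.subset_closure (Set.mem_insert_of_mem _ rfl)
  obtain ⟨byu, hbyu⟩ := hBy
  have hBpow : ∀ y : ZMod (p^e),
      (B ^ ((y * ((byu⁻¹ : (ZMod (p^e))ˣ) : ZMod (p^e))).val)).y = y := by
    intro y
    rw [pow_y, val_cast_self', ← hbyu, mul_assoc, Units.inv_mul, mul_one]
  set k0 := ((-A.y) * ((byu⁻¹ : (ZMod (p^e))ˣ) : ZMod (p^e))).val with hk0
  set C := A * B ^ k0 with hC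
  have hCy : C.y = 0 := by
    rw [hC, McT.mul_y, hk0, hBpow, add_neg_cancel]
  have hCH : C ∈ H := H.mul_mem hA (H.pow_mem hB k0)
  have hk0p : p ∣ k0 := by
    have h1 : pi0 p e i ((-A.y) * ((byu⁻¹ : (ZMod (p^e))ˣ) : ZMod (p^e))) = 0 := by
      rw [map_mul, map_neg, (pi0_zero_iff p e i _).mpr hAy]
      ring
    exact (pi0_zero_iff p e i _).mp h1
  have hCx : IsUnit C.x := by
    rw [isUnit_iff_pi0 p e i]
    rw [hC, McT.mul_x, map_add, map_mul, pi0_chi, one_mul, pow_x, map_mul]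
    have hsum : pi0 p e i (∑ j ∈ range k0, (chi p e i B.y)^j) = 0 := by
      rw [map_sum]
      have : ∀ j ∈ range k0, pi0 p e i ((chi p e i B.y)^j) = 1 := by
        intro j _
        rw [map_pow, pi0_chi, one_pow]
      rw [Finset.sum_congr rfl this, Finset.sum_const, card_range, nsmul_eq_mul, mul_one]
      exact (ZMod.natCast_eq_zero_iff k0 p).mpr hk0p
    rw [hsum, mul_zero, add_zero]
    exact (isUnit_iff_pi0 p e i A.x).mp hAx
  obtain ⟨cxu, hcxu⟩ := hCx
  have hN : ∀ x : ZMod (p^e), (⟨x, 0⟩ : McT p e i) ∈ H := by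
    intro x
    have h1 : C ^ ((x * ((cxu⁻¹ : (ZMod (p^e))ˣ) : ZMod (p^e))).val) = (⟨x, 0⟩ : McT p e i) := by
      ext
      · rw [pow_x, hCy, chi_zero]
        simp only [one_pow, Finset.sum_const, card_range, nsmul_eq_mul, mul_one]
        rw [val_cast_self', ← hcxu]
        show (cxu : ZMod (p^e)) * (x * ((cxu⁻¹ : (ZMod (p^e))ˣ) : ZMod (p^e))) = x
        rw [mul_comm (x) _, ← mul_assoc, Units.mul_inv, one_mul]
      · rw [pow_y, hCy, mul_zero]
    rw [← h1]
    exact H.pow_mem hCH _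
  rw [eq_top_iff]
  rintro v -
  set D := B ^ ((v.y * ((byu⁻¹ : (ZMod (p^e))ˣ) : ZMod (p^e))).val) with hDdef
  have hDy : D.y = v.y := hBpow v.y
  have hveq : v = (⟨v.x - D.x, 0⟩ : McT p e i) * D := by
    ext
    · rw [McT.mul_x]
      show v.x = v.x - D.x + chi p e i 0 * D.x
      rw [chi_zero]; ring
    · rw [McT.mul_y]
      show v.y = 0 + D.y
      rw [hDy, zero_add]
  rw [hveq]
  exact H.mul_mem (hN _) (H.pow_mem hB _)

end gen
section iso
variable (p e i : ℕ) [MF p e i]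

lemma rel_holds (r : FreeGroup Bool) (hr : r ∈ Beauville.MRels p e i) :
    PresentedGroup.mk (Beauville.MRels p e i) r = 1 := by
  have h : r ∈ Subgroup.normalClosure (Beauville.MRels p e i) := Subgroup.subset_normalClosure hr
  exact (QuotientGroup.eq_one_iff r).mpr h

lemma ma_pow_q : (Beauville.ma p e i)^(p^e) = 1 := by
  have h := rel_holds p e i _ (show Beauville.fA^(p^e) ∈ Beauville.MRels p e i from
    Set.mem_insert _ _)
  rw [map_pow] at h
  exact h

lemma mb_pow_q : (Beauville.mb p e i)^(p^e) = 1 := by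
  have h := rel_holds p e i _ (show Beauville.fB^(p^e) ∈ Beauville.MRels p e i from
    Set.mem_insert_of_mem _ (Set.mem_insert _ _))
  rw [map_pow] at h
  exact h

lemma comm_rel : Beauville.ma p e i * Beauville.mb p e i * (Beauville.ma p e i)⁻¹ *
    (Beauville.mb p e i)⁻¹ = (Beauville.ma p e i)^(p^i) := by
  have h := rel_holds p e i _ (show ⁅Beauville.fA, Beauville.fB⁆ * (Beauville.fA^(p^i))⁻¹ ∈
    Beauville.MRels p e i from Set.mem_insert_of_mem _ (Set.mem_insert_of_mem _ rfl))
  rw [map_mul, map_inv, map_pow, map_commutatorElement, commutatorElement_def] at h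
  exact mul_inv_eq_one.mp h

/-- natural-number representative of `c`. -/
def c0 (p e i : ℕ) : ℕ := p^e + 1 - p^i

lemma pi_le_q : p^i ≤ p^e := Nat.pow_le_pow_right (by have := p2 p e i; omega)
  (by have := hie' p e i; omega)

lemma c0_cast : ((c0 p e i : ℕ) : ZMod (p^e)) = cc p e i := by
  rw [c0, cc, Nat.cast_sub (by have := pi_le_q p e i; omega)]
  push_cast
  rw [show ((p:ZMod (p^e)))^e = 0 from by rw [← Nat.cast_pow, ZMod.natCast_self]]
  ring

lemma conj_base : Beauville.mb p e i * Beauville.ma p e i * (Beauville.mb p e i)⁻¹ =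
    (Beauville.ma p e i)^(c0 p e i) := by
  have h := comm_rel p e i
  have hpi : 1 ≤ p^i := Nat.one_le_pow _ _ (by have := p2 p e i; omega)
  have h2 : Beauville.mb p e i * (Beauville.ma p e i)⁻¹ * (Beauville.mb p e i)⁻¹ =
      (Beauville.ma p e i)^(p^i - 1) := by
    have h3 : (Beauville.ma p e i)⁻¹ * ((Beauville.ma p e i) * Beauville.mb p e i *
        (Beauville.ma p e i)⁻¹ * (Beauville.mb p e i)⁻¹) = (Beauville.ma p e i)⁻¹ *
        (Beauville.ma p e i)^(p^i) := by rw [h]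
    calc Beauville.mb p e i * (Beauville.ma p e i)⁻¹ * (Beauville.mb p e i)⁻¹
        = (Beauville.ma p e i)⁻¹ * ((Beauville.ma p e i) * Beauville.mb p e i *
          (Beauville.ma p e i)⁻¹ * (Beauville.mb p e i)⁻¹) := by group
      _ = (Beauville.ma p e i)⁻¹ * (Beauville.ma p e i)^(p^i) := h3
      _ = (Beauville.ma p e i)^(p^i - 1) := by
          have hps : (Beauville.ma p e i)^(p^i) =
              Beauville.ma p e i * (Beauville.ma p e i)^(p^i - 1) := by
            rw [← pow_succ']
            congr 1
            omega
          rw [hps]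
          group
  have h4 : Beauville.mb p e i * Beauville.ma p e i * (Beauville.mb p e i)⁻¹ =
      ((Beauville.ma p e i)^(p^i - 1))⁻¹ := by
    rw [← h2]; group
  rw [h4]
  symm
  rw [eq_inv_iff_mul_eq_one, ← pow_add]
  have h5 : c0 p e i + (p^i - 1) = p^e := by
    have := pi_le_q p e i; rw [c0]; omega
  rw [h5]
  exact ma_pow_q p e i

lemma conj_iter (l x : ℕ) : (Beauville.mb p e i)^l * (Beauville.ma p e i)^x *
    ((Beauville.mb p e i)^l)⁻¹ = (Beauville.ma p e i)^(x * (c0 p e i)^l) := by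
  induction l generalizing x with
  | zero => simp
  | succ l ih =>
    have h1 : (Beauville.mb p e i)^(l+1) * (Beauville.ma p e i)^x *
        ((Beauville.mb p e i)^(l+1))⁻¹ = Beauville.mb p e i * ((Beauville.mb p e i)^l *
        (Beauville.ma p e i)^x * ((Beauville.mb p e i)^l)⁻¹) * (Beauville.mb p e i)⁻¹ := by
      rw [pow_succ']; group
    rw [h1, ih]
    have h2 : Beauville.mb p e i * (Beauville.ma p e i)^(x * (c0 p e i)^l) *
        (Beauville.mb p e i)⁻¹ = ((Beauville.mb p e i * Beauville.ma p e i *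
        (Beauville.mb p e i)⁻¹))^(x * (c0 p e i)^l) := by
      rw [conj_pow]
    rw [h2, conj_base, ← pow_mul]
    congr 1
    rw [pow_succ]
    ring

/-- `μ x = a^x`. -/
def mu (x : ZMod (p^e)) : Beauville.MGroup p e i := (Beauville.ma p e i)^(x.val)
/-- `ν y = b^y`. -/
def nu (y : ZMod (p^e)) : Beauville.MGroup p e i := (Beauville.mb p e i)^(y.val)

lemma ma_pow_mod (n : ℕ) : (Beauville.ma p e i)^n = mu p e i ((n : ZMod (p^e))) := by
  haveI := neZeroQ p e i
  rw [mu, ZMod.val_natCast, pow_eq_pow_mod n (ma_pow_q p e i)]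

lemma mb_pow_mod (n : ℕ) : (Beauville.mb p e i)^n = nu p e i ((n : ZMod (p^e))) := by
  haveI := neZeroQ p e i
  rw [nu, ZMod.val_natCast, pow_eq_pow_mod n (mb_pow_q p e i)]

lemma mu_add (x1 x2 : ZMod (p^e)) : mu p e i (x1 + x2) = mu p e i x1 * mu p e i x2 := by
  haveI := neZeroQ p e i
  rw [mu, mu, mu, ZMod.val_add, ← pow_eq_pow_mod _ (ma_pow_q p e i), pow_add]

lemma nu_add (y1 y2 : ZMod (p^e)) : nu p e i (y1 + y2) = nu p e i y1 * nu p e i y2 := by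
  haveI := neZeroQ p e i
  rw [nu, nu, nu, ZMod.val_add, ← pow_eq_pow_mod _ (mb_pow_q p e i), pow_add]

lemma nu_mu_conj (y x : ZMod (p^e)) :
    nu p e i y * mu p e i x * (nu p e i y)⁻¹ = mu p e i (chi p e i y * x) := by
  haveI := neZeroQ p e i
  rw [nu, mu, conj_iter, ma_pow_mod]
  congr 1
  rw [Nat.cast_mul, Nat.cast_pow, c0_cast, val_cast_self']
  rw [chi]
  ring

/-- the homomorphism `McT → MGroup`. -/
def psi : McT p e i →* Beauville.MGroup p e i :=
  MonoidHom.mk' (fun v => mu p e i v.x * nu p e i v.y) (fun v w => by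
    show mu p e i (v*w).x * nu p e i (v*w).y =
      (mu p e i v.x * nu p e i v.y) * (mu p e i w.x * nu p e i w.y)
    rw [McT.mul_x, McT.mul_y, mu_add, nu_add]
    have h := nu_mu_conj p e i v.y w.x
    rw [← h]
    group)

lemma psi_apply (v : McT p e i) : psi p e i v = mu p e i v.x * nu p e i v.y := rfl

lemma lift_rels : ∀ r ∈ Beauville.MRels p e i,
    FreeGroup.lift (fun t => bif t then av p e i else bv p e i) r = 1 := by
  intro r hr
  simp only [Beauville.MRels, Set.mem_insert_iff, Set.mem_singleton_iff] at hr
  have hfa : FreeGroup.lift (fun t => bif t then av p e i else bv p e i) Beauville.fA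
      = av p e i := FreeGroup.lift_apply_of
  have hfb : FreeGroup.lift (fun t => bif t then av p e i else bv p e i) Beauville.fB
      = bv p e i := FreeGroup.lift_apply_of
  rcases hr with rfl | rfl | rfl
  · rw [map_pow, hfa]
    exact pow_q_eq_one p e i _
  · rw [map_pow, hfb]
    exact pow_q_eq_one p e i _
  · rw [map_mul, map_inv, map_pow, map_commutatorElement, commutatorElement_def, hfa, hfb]
    rw [comm_av_bv, mul_inv_cancel]

/-- the homomorphism `MGroup → McT`. -/
def phiM : Beauville.MGroup p e i →* McT p e i := PresentedGroup.toGroup (lift_rels p e i)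

lemma phiM_ma : phiM p e i (Beauville.ma p e i) = av p e i := PresentedGroup.toGroup.of _
lemma phiM_mb : phiM p e i (Beauville.mb p e i) = bv p e i := PresentedGroup.toGroup.of _

lemma phiM_psi (v : McT p e i) : phiM p e i (psi p e i v) = v := by
  rw [psi_apply, map_mul, mu, nu, map_pow, map_pow, phiM_ma, phiM_mb, av_pow, bv_pow]
  ext
  · rw [McT.mul_x]
    show ((v.x.val : ℕ) : ZMod (p^e)) + chi p e i 0 * 0 = v.x
    rw [chi_zero, mul_zero, add_zero]
    haveI := neZeroQ p e i
    exact val_cast_self' _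
  · rw [McT.mul_y]
    show (0 : ZMod (p^e)) + ((v.y.val : ℕ) : ZMod (p^e)) = v.y
    haveI := neZeroQ p e i
    rw [zero_add]
    exact val_cast_self' _

lemma psi_phiM_hom : (psi p e i).comp (phiM p e i) = MonoidHom.id _ := by
  haveI := factQ p e i
  apply PresentedGroup.ext
  intro t
  cases t
  · show psi p e i (phiM p e i (Beauville.mb p e i)) = Beauville.mb p e i
    rw [phiM_mb, psi_apply]
    show mu p e i 0 * nu p e i 1 = Beauville.mb p e i
    rw [mu, nu, ZMod.val_zero, ZMod.val_one, pow_zero, pow_one, one_mul]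
  · show psi p e i (phiM p e i (Beauville.ma p e i)) = Beauville.ma p e i
    rw [phiM_ma, psi_apply]
    show mu p e i 1 * nu p e i 0 = Beauville.ma p e i
    rw [mu, nu, ZMod.val_zero, ZMod.val_one, pow_zero, pow_one, mul_one]

/-- the isomorphism. -/
noncomputable def eIso : Beauville.MGroup p e i ≃* McT p e i :=
  { toFun := phiM p e i, invFun := psi p e i,
    left_inv := fun g => DFunLike.congr_fun (psi_phiM_hom p e i) g,
    right_inv := phiM_psi p e i,
    map_mul' := map_mul _ }

lemma eIso_ma : eIso p e i (Beauville.ma p e i) = av p e i := phiM_ma p e i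
lemma eIso_mb : eIso p e i (Beauville.mb p e i) = bv p e i := phiM_mb p e i

lemma range_bool {γ : Type*} (f : Bool → γ) : Set.range f = {f true, f false} := by
  ext g
  constructor
  · rintro ⟨b, rfl⟩
    cases b
    · exact Set.mem_insert_of_mem _ rfl
    · exact Set.mem_insert _ _
  · rintro (rfl | rfl)
    · exact ⟨true, rfl⟩
    · exact ⟨false, rfl⟩

lemma closure_mg_top :
    Subgroup.closure ({Beauville.ma p e i, Beauville.mb p e i} :
      Set (Beauville.MGroup p e i)) = ⊤ := by
  have h := PresentedGroup.closure_range_of (Beauville.MRels p e i)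
  rwa [range_bool] at h

lemma finite_mct : Finite (McT p e i) := by
  haveI := neZeroQ p e i
  exact Finite.of_equiv (ZMod (p^e) × ZMod (p^e))
    { toFun := fun v => ⟨v.1, v.2⟩, invFun := fun v => (v.x, v.y),
      left_inv := fun v => rfl, right_inv := fun v => rfl }

lemma finite_mg : Finite (Beauville.MGroup p e i) := by
  haveI := finite_mct p e i
  exact Finite.of_surjective (psi p e i) (fun g => ⟨phiM p e i g, DFunLike.congr_fun (psi_phiM_hom p e i) g⟩)

end iso
section cls
variable (p e i : ℕ) [MF p e i]

lemma cc_pow_one_of_dvd (k : ℕ) (hk : p^(e-i) ∣ k) : (cc p e i)^k = 1 := by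
  obtain ⟨m, rfl⟩ := hk
  rw [pow_mul, cc_pow_t, one_pow]

lemma chi_of_val_dvd (y : ZMod (p^e)) (h : p^(e-i) ∣ y.val) : chi p e i y = 1 :=
  cc_pow_one_of_dvd p e i _ h

lemma t_gt_one : 1 < p^(e-i) :=
  Nat.one_lt_pow (by have := hie' p e i; omega) (by have := p2 p e i; omega)

lemma chi_of_val_mod (y : ZMod (p^e)) (h : y.val % p^(e-i) = 1) : chi p e i y = cc p e i := by
  have h1 : y.val = p^(e-i) * (y.val / p^(e-i)) + 1 := by
    conv_lhs => rw [← Nat.div_add_mod y.val (p^(e-i))]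
    rw [h]
  rw [chi, h1, pow_add, pow_mul, cc_pow_t, one_pow, pow_one, one_mul]

lemma val_mod_of_chi (y : ZMod (p^e)) (h : chi p e i y = cc p e i) : y.val % p^(e-i) = 1 := by
  have hu : (uu p e i)^(y.val) = uu p e i := by
    apply Units.ext
    rw [Units.val_pow_eq_pow_val, uu_val]
    exact h
  rcases Nat.eq_zero_or_pos y.val with h0 | h1
  · exfalso
    rw [h0, pow_zero] at hu
    have hdvd1 : orderOf (uu p e i) ∣ 1 := orderOf_dvd_of_pow_eq_one (by rw [pow_one, ← hu])
    rw [orderOf_uu] at hdvd1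
    have h6 := Nat.le_of_dvd one_pos hdvd1
    have := t_gt_one p e i
    omega
  · have h2 : (uu p e i)^(y.val - 1) * (uu p e i) = 1 * (uu p e i) := by
      rw [← pow_succ, one_mul]
      have h3 : y.val - 1 + 1 = y.val := by omega
      rw [h3, hu]
    have h4 : (uu p e i)^(y.val - 1) = 1 := mul_right_cancel h2
    have h5 : p^(e-i) ∣ y.val - 1 := (uu_pow_eq_one_iff p e i _).mp h4
    obtain ⟨m, hm⟩ := h5
    have h6 : y.val = p^(e-i) * m + 1 := by omega
    rw [h6, Nat.mul_add_mod, Nat.mod_eq_of_lt (t_gt_one p e i)]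

lemma pi_cast_eq : ((p^i : ℕ) : ZMod (p^e)) = 1 - cc p e i := by
  rw [cc]
  push_cast
  ring

lemma rel_y_cond (A B : McT p e i) (hrel : A*B*A⁻¹*B⁻¹ = A^(p^i)) : p^(e-i) ∣ A.y.val := by
  haveI := neZeroQ p e i
  have h1 := congrArg McT.y hrel
  rw [comm_formula, pow_y] at h1
  have h1' : (0 : ZMod (p^e)) = ((p^i : ℕ) : ZMod (p^e)) * A.y := h1
  have h2 : ((p^i * A.y.val : ℕ) : ZMod (p^e)) = 0 := by
    rw [Nat.cast_mul, val_cast_self', ← h1']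
  rw [ZMod.natCast_eq_zero_iff] at h2
  have h3 : p^i * p^(e-i) ∣ p^i * A.y.val := by
    have hh : p^i * p^(e-i) = p^e := by
      rw [← pow_add]; congr 1; have := hie' p e i; omega
    rw [hh]; exact h2
  exact (mul_dvd_mul_iff_left (pow_ne_zero i (hp' p e i).ne_zero)).mp h3

lemma sum_chi_one : ∑ j ∈ range (p^i), (1 : ZMod (p^e))^j = ((p^i : ℕ) : ZMod (p^e)) := by
  simp

lemma rel_x_cond (A B : McT p e i) (hrel : A*B*A⁻¹*B⁻¹ = A^(p^i))
    (hAy : p^(e-i) ∣ A.y.val) (hAx : IsUnit A.x) : B.y.val % p^(e-i) = 1 := by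
  have h1 := congrArg McT.x hrel
  rw [comm_formula, pow_x, chi_of_val_dvd p e i _ hAy, sum_chi_one, pi_cast_eq] at h1
  obtain ⟨xu, hxu⟩ := hAx
  apply val_mod_of_chi
  have h2 : A.x * (1 - chi p e i B.y) = A.x * (1 - cc p e i) := by
    rw [← h1]
    show _ = A.x * (1 - chi p e i B.y) + (1 - 1) * B.x
    ring
  have h3 : (1 : ZMod (p^e)) - chi p e i B.y = 1 - cc p e i := by
    have := congrArg (fun z => ((xu⁻¹ : (ZMod (p^e))ˣ) : ZMod (p^e)) * z) h2
    simp only [← hxu, ← mul_assoc, Units.inv_mul, one_mul] at this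
    exact this
  have h4 : chi p e i B.y = cc p e i := by
    have := congrArg (fun z => (1:ZMod (p^e)) - z) h3
    simpa using this
  exact h4

lemma cond_rel (A B : McT p e i) (hAy : p^(e-i) ∣ A.y.val) (hBy : B.y.val % p^(e-i) = 1) :
    A*B*A⁻¹*B⁻¹ = A^(p^i) := by
  haveI := neZeroQ p e i
  rw [comm_formula]
  ext
  · rw [pow_x, chi_of_val_dvd p e i _ hAy, sum_chi_one, pi_cast_eq, chi_of_val_mod p e i _ hBy]
    show A.x * (1 - cc p e i) + (1 - 1) * B.x = _
    ring
  · rw [pow_y]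
    show (0 : ZMod (p^e)) = ((p^i : ℕ):ZMod (p^e)) * A.y
    obtain ⟨m, hm⟩ := hAy
    have h5 : A.y = ((p^(e-i) * m : ℕ) : ZMod (p^e)) := by
      rw [← hm, val_cast_self']
    have h6 : p^i * (p^(e-i) * m) = p^e * m := by
      rw [← mul_assoc, ← pow_add]
      congr 2
      have := hie' p e i; omega
    rw [h5, ← Nat.cast_mul, h6, Nat.cast_mul, ZMod.natCast_self, zero_mul]

lemma unit_By (B : McT p e i) (hBy : B.y.val % p^(e-i) = 1) : IsUnit B.y := by
  rw [isUnit_iff_val p e i]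
  intro hdvd
  have hpt : p ∣ p^(e-i) := dvd_pow_self p (by have := hie' p e i; omega)
  have h0 : p^(e-i) * (B.y.val / p^(e-i)) + 1 = B.y.val := by
    conv_rhs => rw [← Nat.div_add_mod B.y.val (p^(e-i))]
    rw [hBy]
  have hp1 : p ∣ 1 := by
    have h2 : p ∣ p^(e-i) * (B.y.val / p^(e-i)) := hpt.mul_right _
    have h3 : p ∣ p^(e-i) * (B.y.val / p^(e-i)) + 1 := by rw [h0]; exact hdvd
    exact (Nat.dvd_add_right h2).mp h3
  have := p2 p e i
  have := Nat.le_of_dvd one_pos hp1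
  omega

lemma exists_aut (A B : McT p e i) (hAy : p^(e-i) ∣ A.y.val) (hAx : IsUnit A.x)
    (hBy : B.y.val % p^(e-i) = 1) :
    ∃ θ : MulAut (Beauville.MGroup p e i),
      eIso p e i (θ (Beauville.ma p e i)) = A ∧ eIso p e i (θ (Beauville.mb p e i)) = B := by
  haveI := finite_mg p e i
  have hrels : ∀ r ∈ Beauville.MRels p e i,
      FreeGroup.lift (fun t => bif t then A else B) r = 1 := by
    intro r hr
    simp only [Beauville.MRels, Set.mem_insert_iff, Set.mem_singleton_iff] at hr
    have hfa : FreeGroup.lift (fun t => bif t then A else B) Beauville.fA = A := FreeGroup.lift_apply_of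
    have hfb : FreeGroup.lift (fun t => bif t then A else B) Beauville.fB = B := FreeGroup.lift_apply_of
    rcases hr with rfl | rfl | rfl
    · rw [map_pow, hfa]; exact pow_q_eq_one p e i _
    · rw [map_pow, hfb]; exact pow_q_eq_one p e i _
    · rw [map_mul, map_inv, map_pow, map_commutatorElement, commutatorElement_def, hfa, hfb]
      rw [cond_rel p e i A B hAy hBy, mul_inv_cancel]
  set θ0 : Beauville.MGroup p e i →* McT p e i := PresentedGroup.toGroup hrels with hθ0
  have hθ0a : θ0 (Beauville.ma p e i) = A := PresentedGroup.toGroup.of _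
  have hθ0b : θ0 (Beauville.mb p e i) = B := PresentedGroup.toGroup.of _
  have hcl : Subgroup.closure ({A, B} : Set (McT p e i)) = ⊤ :=
    closure_pair_eq_top' p e i A B hAx
      (dvd_trans (dvd_pow_self p (by have := hie' p e i; omega)) hAy)
      (unit_By p e i B hBy)
  have hsurj0 : Function.Surjective θ0 := by
    rw [← MonoidHom.range_eq_top]
    rw [eq_top_iff, ← hcl, Subgroup.closure_le]
    rintro g (rfl | rfl)
    · exact ⟨Beauville.ma p e i, hθ0a⟩
    · exact ⟨Beauville.mb p e i, hθ0b⟩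
  set θ1 : Beauville.MGroup p e i →* Beauville.MGroup p e i :=
    ((eIso p e i).symm.toMonoidHom).comp θ0 with hθ1
  have hsurj1 : Function.Surjective θ1 := by
    intro g
    obtain ⟨x, hx⟩ := hsurj0 (eIso p e i g)
    refine ⟨x, ?_⟩
    show (eIso p e i).symm (θ0 x) = g
    rw [hx, MulEquiv.symm_apply_apply]
  have hinj1 : Function.Injective θ1 := Finite.injective_iff_surjective.mpr hsurj1
  refine ⟨MulEquiv.ofBijective θ1 ⟨hinj1, hsurj1⟩, ?_, ?_⟩
  · show eIso p e i (θ1 (Beauville.ma p e i)) = A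
    rw [hθ1]
    show eIso p e i ((eIso p e i).symm (θ0 (Beauville.ma p e i))) = A
    rw [MulEquiv.apply_symm_apply, hθ0a]
  · show eIso p e i (θ1 (Beauville.mb p e i)) = B
    rw [hθ1]
    show eIso p e i ((eIso p e i).symm (θ0 (Beauville.mb p e i))) = B
    rw [MulEquiv.apply_symm_apply, hθ0b]

lemma aut_conds (θ : MulAut (Beauville.MGroup p e i)) :
    p^(e-i) ∣ (eIso p e i (θ (Beauville.ma p e i))).y.val ∧
      IsUnit (eIso p e i (θ (Beauville.ma p e i))).x ∧
      (eIso p e i (θ (Beauville.mb p e i))).y.val % p^(e-i) = 1 := by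
  set A := eIso p e i (θ (Beauville.ma p e i)) with hA
  set B := eIso p e i (θ (Beauville.mb p e i)) with hB
  set f : Beauville.MGroup p e i →* McT p e i :=
    (eIso p e i).toMonoidHom.comp θ.toMonoidHom with hf
  have hfa : f (Beauville.ma p e i) = A := rfl
  have hfb : f (Beauville.mb p e i) = B := rfl
  have hrel : A*B*A⁻¹*B⁻¹ = A^(p^i) := by
    rw [← hfa, ← hfb, ← map_inv, ← map_inv, ← map_mul, ← map_mul, ← map_mul, ← map_pow]
    rw [comm_rel]
  have hAy : p^(e-i) ∣ A.y.val := rel_y_cond p e i A B hrel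
  have hgen : Subgroup.closure ({A, B} : Set (McT p e i)) = ⊤ := by
    have h1 := congrArg (Subgroup.map f) (closure_mg_top p e i)
    rw [MonoidHom.map_closure, Set.image_pair, hfa, hfb] at h1
    rw [h1]
    have hfs : Function.Surjective f := by
      intro v
      refine ⟨θ.symm ((eIso p e i).symm v), ?_⟩
      show eIso p e i (θ (θ.symm ((eIso p e i).symm v))) = v
      rw [MulEquiv.apply_symm_apply, MulEquiv.apply_symm_apply]
    rw [← MonoidHom.range_eq_top] at hfs
    rw [← MonoidHom.range_eq_map, hfs]
  have hAx : IsUnit A.x := by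
    by_contra hcon
    refine not_gen_of_pi0_zero p e i A B hgen ?_ ?_
    · by_contra h2
      exact hcon ((isUnit_iff_pi0 p e i A.x).mpr h2)
    · rw [pi0_zero_iff]
      exact dvd_trans (dvd_pow_self p (by have := hie' p e i; omega)) hAy
  exact ⟨hAy, hAx, rel_x_cond p e i A B hrel hAy hAx⟩

end cls
lemma isUnit_cast_iff (p e i : ℕ) [MF p e i] (n : ℕ) : IsUnit ((n : ZMod (p^e))) ↔ ¬ p ∣ n := by
  haveI := neZeroQ p e i
  rw [isUnit_iff_val p e i, ZMod.val_natCast,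
    Nat.dvd_mod_iff (dvd_pow_self p (by have := hie' p e i; omega))]

section fin
variable (p e i : ℕ) [MF p e i]

lemma eIso_apply (g : Beauville.MGroup p e i) : eIso p e i g = phiM p e i g := rfl

lemma eIso_ba_a (m n : ℕ) :
    eIso p e i (Beauville.mb p e i ^ (m * p^(e-i)) * Beauville.ma p e i ^ n)
      = ⟨(n : ZMod (p^e)), ((m * p^(e-i) : ℕ) : ZMod (p^e))⟩ := by
  haveI := neZeroQ p e i
  rw [eIso_apply, map_mul, map_pow, map_pow, phiM_ma, phiM_mb, av_pow, bv_pow]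
  ext
  · rw [McT.mul_x]
    show (0:ZMod (p^e)) + chi p e i ((m * p^(e-i) : ℕ) : ZMod (p^e)) * (n : ZMod (p^e)) = _
    rw [chi_natCast, cc_pow_one_of_dvd p e i _ (Dvd.intro_left m rfl), one_mul, zero_add]
  · rw [McT.mul_y]
    show ((m * p^(e-i) : ℕ) : ZMod (p^e)) + 0 = _
    rw [add_zero]

lemma eIso_ba_b (r s : ℕ) :
    eIso p e i (Beauville.mb p e i ^ (1 + r * p^(e-i)) * Beauville.ma p e i ^ s)
      = ⟨cc p e i * (s : ZMod (p^e)), ((1 + r * p^(e-i) : ℕ) : ZMod (p^e))⟩ := by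
  haveI := neZeroQ p e i
  rw [eIso_apply, map_mul, map_pow, map_pow, phiM_ma, phiM_mb, av_pow, bv_pow]
  ext
  · rw [McT.mul_x]
    show (0:ZMod (p^e)) + chi p e i ((1 + r * p^(e-i) : ℕ) : ZMod (p^e)) * (s : ZMod (p^e)) = _
    rw [chi_natCast, pow_add, pow_one, show r * p^(e-i) = p^(e-i) * r from Nat.mul_comm _ _,
      pow_mul, cc_pow_t, one_pow, mul_one, zero_add]
  · rw [McT.mul_y]
    show ((1 + r * p^(e-i) : ℕ) : ZMod (p^e)) + 0 = _
    rw [add_zero]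

lemma t_dvd_q : p^(e-i) ∣ p^e :=
  pow_dvd_pow p (by have := hie' p e i; omega)

lemma val_cast_dvd (m : ℕ) : p^(e-i) ∣ (((m * p^(e-i) : ℕ) : ZMod (p^e))).val := by
  haveI := neZeroQ p e i
  rw [ZMod.val_natCast]
  exact (Nat.dvd_mod_iff (t_dvd_q p e i)).mpr (Dvd.intro_left m rfl)

lemma val_cast_mod (r : ℕ) : (((1 + r * p^(e-i) : ℕ) : ZMod (p^e))).val % p^(e-i) = 1 := by
  haveI := neZeroQ p e i
  rw [ZMod.val_natCast, Nat.mod_mod_of_dvd _ (t_dvd_q p e i), Nat.add_mul_mod_self_right]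
  exact Nat.mod_eq_of_lt (t_gt_one p e i)

lemma part1 (m r n s : ℕ) :
    (∃ θ : MulAut (Beauville.MGroup p e i),
        θ (Beauville.ma p e i) = Beauville.mb p e i ^ (m * p ^ (e - i)) *
          Beauville.ma p e i ^ n ∧
        θ (Beauville.mb p e i) = Beauville.mb p e i ^ (1 + r * p ^ (e - i)) *
          Beauville.ma p e i ^ s) ↔ ¬ p ∣ n := by
  constructor
  · rintro ⟨θ, hθa, hθb⟩
    have hconds := aut_conds p e i θ
    rw [hθa, eIso_ba_a] at hconds
    have hunit : IsUnit ((n : ZMod (p^e))) := hconds.2.1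
    exact (isUnit_cast_iff p e i n).mp hunit
  · intro hn
    obtain ⟨θ, h1, h2⟩ := exists_aut p e i ⟨(n : ZMod (p^e)), ((m * p^(e-i) : ℕ) : ZMod (p^e))⟩
      ⟨cc p e i * (s : ZMod (p^e)), ((1 + r * p^(e-i) : ℕ) : ZMod (p^e))⟩
      (val_cast_dvd p e i m) ((isUnit_cast_iff p e i n).mpr hn) (val_cast_mod p e i r)
    refine ⟨θ, ?_, ?_⟩
    · apply (eIso p e i).injective
      rw [h1, eIso_ba_a]
    · apply (eIso p e i).injective
      rw [h2, eIso_ba_b]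

lemma pi_t_eq : p^i * p^(e-i) = p^e := by
  rw [← pow_add]; congr 1; have := hie' p e i; omega

lemma part2 (θ : MulAut (Beauville.MGroup p e i)) : ∃ m r n s : ℕ,
    1 ≤ m ∧ m ≤ p ^ i ∧ 1 ≤ r ∧ r ≤ p ^ i ∧ 1 ≤ n ∧ n ≤ p ^ e ∧ 1 ≤ s ∧ s ≤ p ^ e ∧
    ¬ p ∣ n ∧
    θ (Beauville.ma p e i) = Beauville.mb p e i ^ (m * p ^ (e - i)) *
      Beauville.ma p e i ^ n ∧
    θ (Beauville.mb p e i) = Beauville.mb p e i ^ (1 + r * p ^ (e - i)) *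
      Beauville.ma p e i ^ s := by
  haveI := neZeroQ p e i
  obtain ⟨hAy, hAx, hBy⟩ := aut_conds p e i θ
  set A := eIso p e i (θ (Beauville.ma p e i)) with hA
  set B := eIso p e i (θ (Beauville.mb p e i)) with hB
  have hq1 := q1 p e i
  have ht1 := t_gt_one p e i
  have hpi1 : 1 ≤ p^i := Nat.one_le_pow _ _ (by have := p2 p e i; omega)
  have hpt := pi_t_eq p e i
  -- m
  obtain ⟨m0, hm0⟩ := hAy
  have hm0lt : m0 < p^i := by
    have hv := ZMod.val_lt A.y
    by_contra hcon
    push_neg at hcon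
    have : p^e ≤ p^(e-i) * m0 := by
      calc p^e = p^i * p^(e-i) := hpt.symm
        _ ≤ m0 * p^(e-i) := Nat.mul_le_mul_right _ hcon
        _ = p^(e-i) * m0 := Nat.mul_comm _ _
    omega
  have hmEx : ∃ m : ℕ, 1 ≤ m ∧ m ≤ p^i ∧ A.y = ((m * p^(e-i) : ℕ) : ZMod (p^e)) := by
    rcases Nat.eq_zero_or_pos m0 with h0 | h0
    · refine ⟨p^i, hpi1, le_refl _, ?_⟩
      have hy0 : A.y = 0 := by
        rw [← val_cast_self' A.y, hm0, h0, Nat.mul_zero, Nat.cast_zero]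
      rw [hy0, hpt, ZMod.natCast_self]
    · refine ⟨m0, h0, le_of_lt hm0lt, ?_⟩
      rw [← val_cast_self' A.y, hm0, Nat.mul_comm]
  obtain ⟨m, hm1, hm2, hmcast⟩ := hmEx
  -- n
  set n : ℕ := A.x.val with hn
  have hnp : ¬ p ∣ n := (isUnit_iff_val p e i A.x).mp hAx
  have hn1 : 1 ≤ n := by
    rcases Nat.eq_zero_or_pos n with h0 | h1
    · exfalso; exact hnp (by rw [h0]; exact dvd_zero p)
    · exact h1
  -- r
  set r0 : ℕ := B.y.val / p^(e-i) with hr0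
  have hr0eq : B.y.val = p^(e-i) * r0 + 1 := by
    conv_lhs => rw [← Nat.div_add_mod B.y.val (p^(e-i))]
    rw [hBy]
  have hr0lt : r0 < p^i := by
    have hv := ZMod.val_lt B.y
    by_contra hcon
    push_neg at hcon
    have : p^e ≤ p^(e-i) * r0 := by
      calc p^e = p^i * p^(e-i) := hpt.symm
        _ ≤ r0 * p^(e-i) := Nat.mul_le_mul_right _ hcon
        _ = p^(e-i) * r0 := Nat.mul_comm _ _
    omega
  have hrEx : ∃ r : ℕ, 1 ≤ r ∧ r ≤ p^i ∧ B.y = ((1 + r * p^(e-i) : ℕ) : ZMod (p^e)) := by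
    rcases Nat.eq_zero_or_pos r0 with h0 | h0
    · refine ⟨p^i, hpi1, le_refl _, ?_⟩
      have hy1 : B.y = ((1:ℕ) : ZMod (p^e)) := by
        rw [← val_cast_self' B.y, hr0eq, h0, Nat.mul_zero, Nat.zero_add]
      rw [hy1, Nat.cast_add, hpt, ZMod.natCast_self, add_zero]
    · refine ⟨r0, h0, le_of_lt hr0lt, ?_⟩
      rw [← val_cast_self' B.y, hr0eq]
      congr 1
      ring
  obtain ⟨r, hr1, hr2, hrcast⟩ := hrEx
  -- s
  set z : ZMod (p^e) := (((uu p e i)⁻¹ : (ZMod (p^e))ˣ) : ZMod (p^e)) * B.x with hz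
  have hzx : cc p e i * z = B.x := by
    rw [hz, ← uu_val, ← mul_assoc, Units.mul_inv, one_mul]
  have hsEx : ∃ s : ℕ, 1 ≤ s ∧ s ≤ p^e ∧ B.x = cc p e i * ((s:ℕ) : ZMod (p^e)) := by
    rcases Nat.eq_zero_or_pos z.val with h0 | h0
    · refine ⟨p^e, by omega, le_refl _, ?_⟩
      have hz0 : z = 0 := by
        rw [← val_cast_self' z, h0, Nat.cast_zero]
      rw [ZMod.natCast_self, mul_zero, ← hzx, hz0, mul_zero]
    · refine ⟨z.val, h0, le_of_lt (ZMod.val_lt z), ?_⟩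
      rw [val_cast_self', hzx]
  obtain ⟨s, hs1, hs2, hscast⟩ := hsEx
  refine ⟨m, r, n, s, hm1, hm2, hr1, hr2, hn1, le_of_lt (ZMod.val_lt A.x), hs1, hs2, hnp,
    ?_, ?_⟩
  · apply (eIso p e i).injective
    rw [eIso_ba_a, ← hA]
    ext
    · show A.x = ((n:ℕ) : ZMod (p^e))
      rw [hn, val_cast_self']
    · exact hmcast
  · apply (eIso p e i).injective
    rw [eIso_ba_b, ← hB]
    ext
    · exact hscast
    · exact hrcast

end fin
section cnt
variable (p e i : ℕ) [MF p e i]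

lemma mulaut_ext (θ θ' : MulAut (Beauville.MGroup p e i))
    (ha : θ (Beauville.ma p e i) = θ' (Beauville.ma p e i))
    (hb : θ (Beauville.mb p e i) = θ' (Beauville.mb p e i)) : θ = θ' := by
  have h : (θ : Beauville.MGroup p e i →* Beauville.MGroup p e i) = θ' := by
    apply PresentedGroup.ext
    intro t
    cases t
    · exact hb
    · exact ha
  exact MulEquiv.ext fun g => DFunLike.congr_fun h g

/-- automorphisms correspond to pairs satisfying the three conditions. -/
noncomputable def autEquiv : MulAut (Beauville.MGroup p e i) ≃
    {AB : McT p e i × McT p e i //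
      p^(e-i) ∣ AB.1.y.val ∧ IsUnit AB.1.x ∧ AB.2.y.val % p^(e-i) = 1} :=
  Equiv.ofBijective (fun θ => ⟨(eIso p e i (θ (Beauville.ma p e i)),
      eIso p e i (θ (Beauville.mb p e i))), aut_conds p e i θ⟩)
    ⟨fun θ θ' h => by
      have h1 := congrArg (fun t : {AB : McT p e i × McT p e i //
        p^(e-i) ∣ AB.1.y.val ∧ IsUnit AB.1.x ∧ AB.2.y.val % p^(e-i) = 1} => t.1.1) h
      have h2 := congrArg (fun t : {AB : McT p e i × McT p e i //
        p^(e-i) ∣ AB.1.y.val ∧ IsUnit AB.1.x ∧ AB.2.y.val % p^(e-i) = 1} => t.1.2) h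
      simp only at h1 h2
      exact mulaut_ext p e i θ θ' ((eIso p e i).injective h1) ((eIso p e i).injective h2),
     fun s => by
      obtain ⟨⟨A, B⟩, hAy, hAx, hBy⟩ := s
      obtain ⟨θ, h1, h2⟩ := exists_aut p e i A B hAy hAx hBy
      exact ⟨θ, Subtype.ext (Prod.ext h1 h2)⟩⟩

/-- splitting the conditions componentwise. -/
def condEquiv : {AB : McT p e i × McT p e i //
      p^(e-i) ∣ AB.1.y.val ∧ IsUnit AB.1.x ∧ AB.2.y.val % p^(e-i) = 1} ≃
    ({y : ZMod (p^e) // p^(e-i) ∣ y.val} × {x : ZMod (p^e) // IsUnit x} ×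
     {y : ZMod (p^e) // y.val % p^(e-i) = 1} × ZMod (p^e)) where
  toFun s := (⟨s.1.1.y, s.2.1⟩, ⟨s.1.1.x, s.2.2.1⟩, ⟨s.1.2.y, s.2.2.2⟩, s.1.2.x)
  invFun t := ⟨(⟨t.2.1.1, t.1.1⟩, ⟨t.2.2.2, t.2.2.1.1⟩), t.1.2, t.2.1.2, t.2.2.1.2⟩
  left_inv s := rfl
  right_inv t := rfl

noncomputable def e3 : {y : ZMod (p^e) // p^(e-i) ∣ y.val} ≃ ZMod (p^i) where
  toFun y := ((y.1.val / p^(e-i) : ℕ) : ZMod (p^i))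
  invFun k := ⟨((p^(e-i) * k.val : ℕ) : ZMod (p^e)), by
    haveI := neZeroQ p e i
    rw [ZMod.val_natCast]
    exact (Nat.dvd_mod_iff (t_dvd_q p e i)).mpr ⟨k.val, rfl⟩⟩
  left_inv := by
    haveI := neZeroQ p e i
    haveI : NeZero (p^i) := ⟨pow_ne_zero _ (hp' p e i).ne_zero⟩
    rintro ⟨y, d, hd⟩
    apply Subtype.ext
    show ((p^(e-i) * (((y.val / p^(e-i) : ℕ) : ZMod (p^i))).val : ℕ) : ZMod (p^e)) = y
    have htpos : 0 < p^(e-i) := by have := t_gt_one p e i; omega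
    have hdiv : y.val / p^(e-i) = d := by rw [hd, Nat.mul_div_cancel_left _ htpos]
    have hdlt : d < p^i := by
      have hv := ZMod.val_lt y
      rw [hd] at hv
      by_contra hcon
      push_neg at hcon
      have : p^e ≤ p^(e-i) * d := by
        calc p^e = p^i * p^(e-i) := (pi_t_eq p e i).symm
          _ ≤ d * p^(e-i) := Nat.mul_le_mul_right _ hcon
          _ = p^(e-i) * d := Nat.mul_comm _ _
      omega
    rw [hdiv, ZMod.val_natCast, Nat.mod_eq_of_lt hdlt, ← hd, val_cast_self']
  right_inv := by
    haveI := neZeroQ p e i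
    haveI : NeZero (p^i) := ⟨pow_ne_zero _ (hp' p e i).ne_zero⟩
    intro k
    show (((((p^(e-i) * k.val : ℕ) : ZMod (p^e))).val / p^(e-i) : ℕ) : ZMod (p^i)) = k
    have hlt : p^(e-i) * k.val < p^e := by
      have hv := ZMod.val_lt k
      have htpos : 0 < p^(e-i) := by have := t_gt_one p e i; omega
      calc p^(e-i) * k.val < p^(e-i) * p^i := mul_lt_mul_of_pos_left hv htpos
        _ = p^e := by rw [Nat.mul_comm]; exact pi_t_eq p e i
    rw [ZMod.val_natCast, Nat.mod_eq_of_lt hlt,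
      Nat.mul_div_cancel_left _ (by have := t_gt_one p e i; omega : 0 < p^(e-i)),
      val_cast_self']

noncomputable def e4 : {y : ZMod (p^e) // y.val % p^(e-i) = 1} ≃ ZMod (p^i) where
  toFun y := ((y.1.val / p^(e-i) : ℕ) : ZMod (p^i))
  invFun k := ⟨((1 + p^(e-i) * k.val : ℕ) : ZMod (p^e)), by
    haveI := neZeroQ p e i
    have hlt : 1 + p^(e-i) * k.val < p^e := by
      haveI : NeZero (p^i) := ⟨pow_ne_zero _ (hp' p e i).ne_zero⟩
      have h1 : k.val + 1 ≤ p^i := ZMod.val_lt k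
      have h2 : p^(e-i) * (k.val + 1) ≤ p^(e-i) * p^i := Nat.mul_le_mul_left _ h1
      have h3 : p^(e-i) * p^i = p^e := by rw [Nat.mul_comm]; exact pi_t_eq p e i
      have := t_gt_one p e i
      nlinarith [Nat.mul_le_mul_left (p^(e-i)) h1]
    rw [ZMod.val_natCast, Nat.mod_eq_of_lt hlt, Nat.add_mul_mod_self_left]
    exact Nat.mod_eq_of_lt (t_gt_one p e i)⟩
  left_inv := by
    haveI := neZeroQ p e i
    haveI : NeZero (p^i) := ⟨pow_ne_zero _ (hp' p e i).ne_zero⟩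
    rintro ⟨y, hy⟩
    apply Subtype.ext
    show ((1 + p^(e-i) * (((y.val / p^(e-i) : ℕ) : ZMod (p^i))).val : ℕ) : ZMod (p^e)) = y
    set d := y.val / p^(e-i) with hdd
    have hd : y.val = p^(e-i) * d + 1 := by
      conv_lhs => rw [← Nat.div_add_mod y.val (p^(e-i))]
      rw [hy]
    have hdlt : d < p^i := by
      have hv := ZMod.val_lt y
      by_contra hcon
      push_neg at hcon
      have : p^e ≤ p^(e-i) * d := by
        calc p^e = p^i * p^(e-i) := (pi_t_eq p e i).symm
          _ ≤ d * p^(e-i) := Nat.mul_le_mul_right _ hcon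
          _ = p^(e-i) * d := Nat.mul_comm _ _
      omega
    rw [ZMod.val_natCast, Nat.mod_eq_of_lt hdlt]
    rw [← val_cast_self' y, hd]
    congr 1
    ring
  right_inv := by
    haveI := neZeroQ p e i
    haveI : NeZero (p^i) := ⟨pow_ne_zero _ (hp' p e i).ne_zero⟩
    intro k
    show (((((1 + p^(e-i) * k.val : ℕ) : ZMod (p^e))).val / p^(e-i) : ℕ) : ZMod (p^i)) = k
    have hlt : 1 + p^(e-i) * k.val < p^e := by
      have h1 : k.val + 1 ≤ p^i := ZMod.val_lt k
      have h3 : p^(e-i) * p^i = p^e := by rw [Nat.mul_comm]; exact pi_t_eq p e i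
      have := t_gt_one p e i
      nlinarith [Nat.mul_le_mul_left (p^(e-i)) h1]
    rw [ZMod.val_natCast, Nat.mod_eq_of_lt hlt]
    have htpos : 0 < p^(e-i) := by have := t_gt_one p e i; omega
    rw [Nat.add_mul_div_left _ _ htpos, Nat.div_eq_of_lt (t_gt_one p e i), Nat.zero_add,
      val_cast_self']

end cnt

noncomputable def e5' (nn : ℕ) : {x : ZMod nn // IsUnit x} ≃ (ZMod nn)ˣ where
  toFun x := x.2.unit
  invFun u := ⟨(u : ZMod nn), u.isUnit⟩
  left_inv x := Subtype.ext x.2.unit_spec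
  right_inv u := Units.ext u.isUnit.unit_spec

section cnt2
variable (p e i : ℕ) [MF p e i]

lemma part3 : Nat.card (MulAut (Beauville.MGroup p e i)) = (p - 1) * p^(2*e+2*i-1) := by
  haveI := neZeroQ p e i
  haveI : NeZero (p^i) := ⟨pow_ne_zero _ (hp' p e i).ne_zero⟩
  rw [Nat.card_congr (autEquiv p e i), Nat.card_congr (condEquiv p e i)]
  rw [Nat.card_prod, Nat.card_prod, Nat.card_prod]
  rw [Nat.card_congr (e3 p e i), Nat.card_congr (e4 p e i), Nat.card_congr (e5' (p^e))]
  rw [Nat.card_zmod]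
  rw [Nat.card_eq_fintype_card, ZMod.card_units_eq_totient,
    Nat.totient_prime_pow (hp' p e i) (by have := hie' p e i; omega : 0 < e)]
  have h2 : 2*e+2*i-1 = i + ((e-1) + (i + e)) := by have := hie' p e i; omega
  rw [h2, pow_add, pow_add, pow_add, Nat.card_zmod]
  ring

end cnt2
end MAux
section Statements

theorem statement3 (p e i : ℕ) (hp : p.Prime) (hodd : Odd p) (h1 : 1 ≤ i) (h2 : i ≤ e - 1) :
    (∀ m r n s : ℕ, 1 ≤ m → m ≤ p ^ i → 1 ≤ r → r ≤ p ^ i →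
      1 ≤ n → n ≤ p ^ e → 1 ≤ s → s ≤ p ^ e →
      ((∃ θ : MulAut (MGroup p e i),
          θ (ma p e i) = mb p e i ^ (m * p ^ (e - i)) * ma p e i ^ n ∧
          θ (mb p e i) = mb p e i ^ (1 + r * p ^ (e - i)) * ma p e i ^ s) ↔ ¬ p ∣ n)) ∧
    (∀ θ : MulAut (MGroup p e i), ∃ m r n s : ℕ,
      1 ≤ m ∧ m ≤ p ^ i ∧ 1 ≤ r ∧ r ≤ p ^ i ∧ 1 ≤ n ∧ n ≤ p ^ e ∧ 1 ≤ s ∧ s ≤ p ^ e ∧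
      ¬ p ∣ n ∧
      θ (ma p e i) = mb p e i ^ (m * p ^ (e - i)) * ma p e i ^ n ∧
      θ (mb p e i) = mb p e i ^ (1 + r * p ^ (e - i)) * ma p e i ^ s) ∧
    Nat.card (MulAut (MGroup p e i)) = (p - 1) * p ^ (2 * e + 2 * i - 1) := by
  haveI : MAux.MF p e i := ⟨hp, hodd, h1, by omega⟩
  refine ⟨?_, ?_, ?_⟩
  · intro m r n s _ _ _ _ _ _ _ _
    exact MAux.part1 p e i m r n s
  · intro θ
    exact MAux.part2 p e i θ
  · exact MAux.part3 p e i

end Statements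

end Beauville
end

section
/- Let p be an odd prime and let G = H(p,e,i,j,k). Then Z(G) = G^{p^j}·G′, where G^{p^j} is the subgroup generated by all p^j-th powers of elements of G and G′ is the commutator subgroup of G. Consequently, |Z(G)| = p^{e+i−j}. -/
open Subgroup Equiv

open scoped commutatorElement

set_option linter.unusedSectionVars false
set_option linter.unreachableTactic false
set_option linter.unusedTactic false
set_option linter.unusedVariables false

namespace Stmt6Aux

/-- The model group K: class-2 group on `ZMod N × ZMod N × ZMod M`. -/
@[ext]
structure KT (N M : ℕ) where
  x : ZMod N
  y : ZMod N
  z : ZMod M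

variable {N M : ℕ} [Fact (M ∣ N)]

def cst : ZMod N →+* ZMod M := ZMod.castHom (m := M) (n := N) Fact.out (ZMod M)

instance : Mul (KT N M) := ⟨fun u v => ⟨u.x + v.x, u.y + v.y, u.z + v.z + cst u.y * cst v.x⟩⟩
instance : One (KT N M) := ⟨⟨0, 0, 0⟩⟩
instance : Inv (KT N M) := ⟨fun u => ⟨-u.x, -u.y, -u.z + cst u.y * cst u.x⟩⟩

lemma kmul_def (u v : KT N M) :
    u * v = ⟨u.x + v.x, u.y + v.y, u.z + v.z + cst u.y * cst v.x⟩ := rfl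
lemma kone_def : (1 : KT N M) = ⟨0, 0, 0⟩ := rfl
lemma kinv_def (u : KT N M) : u⁻¹ = ⟨-u.x, -u.y, -u.z + cst u.y * cst u.x⟩ := rfl

instance : Group (KT N M) where
  mul_assoc u v w := by
    ext <;> simp [kmul_def] <;> ring
  one_mul u := by ext <;> simp [kmul_def, kone_def]
  mul_one u := by ext <;> simp [kmul_def, kone_def]
  inv_mul_cancel u := by ext <;> simp [kmul_def, kinv_def, kone_def] <;> ring

lemma kzpow_x0 (y : ZMod N) (z : ZMod M) (n : ℤ) :
    (⟨0, y, z⟩ : KT N M) ^ n = ⟨0, n • y, n • z⟩ := by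
  have hnat : ∀ m : ℕ, (⟨0, y, z⟩ : KT N M) ^ m = ⟨0, m • y, m • z⟩ := by
    intro m
    induction m with
    | zero => simp [kone_def]
    | succ m ih => rw [pow_succ, ih]; ext <;> simp [kmul_def, add_smul] <;> ring
  obtain ⟨m, rfl | rfl⟩ := n.eq_nat_or_neg
  · rw [zpow_natCast, hnat]; simp
  · rw [zpow_neg, zpow_natCast, hnat]; ext <;> simp [kinv_def]

lemma kzpow_y0 (x : ZMod N) (z : ZMod M) (n : ℤ) :
    (⟨x, 0, z⟩ : KT N M) ^ n = ⟨n • x, 0, n • z⟩ := by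
  have hnat : ∀ m : ℕ, (⟨x, 0, z⟩ : KT N M) ^ m = ⟨m • x, 0, m • z⟩ := by
    intro m
    induction m with
    | zero => simp [kone_def]
    | succ m ih => rw [pow_succ, ih]; ext <;> simp [kmul_def, add_smul] <;> ring
  obtain ⟨m, rfl | rfl⟩ := n.eq_nat_or_neg
  · rw [zpow_natCast, hnat]; simp
  · rw [zpow_neg, zpow_natCast, hnat]; ext <;> simp [kinv_def]

def aK : KT N M := ⟨1, 0, 0⟩
def bK : KT N M := ⟨0, 1, 0⟩
def cK : KT N M := ⟨0, 0, 1⟩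

lemma aK_zpow (n : ℤ) : (aK : KT N M) ^ n = ⟨(n : ZMod N), 0, 0⟩ := by
  rw [aK, kzpow_y0]; congr 1 <;> simp
lemma bK_zpow (n : ℤ) : (bK : KT N M) ^ n = ⟨0, (n : ZMod N), 0⟩ := by
  rw [bK, kzpow_x0]; congr 1 <;> simp
lemma cK_zpow (n : ℤ) : (cK : KT N M) ^ n = ⟨0, 0, (n : ZMod M)⟩ := by
  rw [cK, kzpow_x0]; congr 1 <;> simp

lemma abcK (α β γ : ℤ) :
    (aK : KT N M) ^ α * bK ^ β * cK ^ γ = ⟨(α : ZMod N), (β : ZMod N), (γ : ZMod M)⟩ := by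
  rw [aK_zpow, bK_zpow, cK_zpow]
  ext <;> simp [kmul_def]

lemma commK : ⁅(bK : KT N M), (aK : KT N M)⁆ = cK := by
  show bK * aK * bK⁻¹ * aK⁻¹ = cK
  ext <;> simp [kmul_def, kinv_def, aK, bK, cK]


section Generic

variable {G : Type*} [Group G] {a b c : G}

lemma comm_shift {z x : G} (h : Commute z x) (y : G) : x * (z * y) = z * (x * y) := by
  rw [← mul_assoc, ← h.eq, mul_assoc]

/-- normal form -/
def nf (a b c : G) (α β γ : ℤ) : G := a ^ α * (b ^ β * c ^ γ)

variable (hba : b * a = c * (a * b)) (hca : Commute c a) (hcb : Commute c b)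

include hba hca hcb

lemma scbma (m : ℤ) : SemiconjBy (b ^ m) a (c ^ m * a) := by
  have s : SemiconjBy a b (c⁻¹ * b) := by
    show a * b = c⁻¹ * b * a
    rw [mul_assoc, hba, inv_mul_cancel_left]
  have e1 : a * b ^ m = c ^ (-m) * b ^ m * a := by
    have := (s.zpow_right m).eq
    rwa [hcb.inv_left.mul_zpow, inv_zpow, ← zpow_neg] at this
  show b ^ m * a = c ^ m * a * b ^ m
  rw [mul_assoc, e1, ← mul_assoc, ← mul_assoc, ← zpow_add, add_neg_cancel, zpow_zero, one_mul]

lemma L2 (m n : ℤ) : b ^ m * a ^ n = c ^ (m * n) * (a ^ n * b ^ m) := by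
  have := ((scbma hba hca hcb m).zpow_right n).eq
  rwa [(hca.zpow_left m).mul_zpow, ← zpow_mul, mul_assoc] at this

lemma L2' (m n : ℤ) (y : G) : b ^ m * (a ^ n * y) = c ^ (m * n) * (a ^ n * (b ^ m * y)) := by
  rw [← mul_assoc, L2 hba hca hcb, mul_assoc, mul_assoc]

lemma L3 (α β γ α' β' γ' : ℤ) :
    nf a b c α β γ * nf a b c α' β' γ' = nf a b c (α + α') (β + β') (γ + γ' + β * α') := by
  unfold nf
  simp only [mul_assoc]
  rw [comm_shift (hca.symm.zpow_zpow α' γ) (b ^ β' * c ^ γ')]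
  rw [L2' hba hca hcb β α' (c ^ γ * (b ^ β' * c ^ γ'))]
  rw [comm_shift (hcb.symm.zpow_zpow β' γ) (c ^ γ')]
  rw [zpow_add a, zpow_add b, zpow_add c (γ + γ'), zpow_add c γ]
  simp only [mul_assoc]
  rw [comm_shift ((hca.symm.zpow_zpow α' (β * α'))) (b ^ β * (b ^ β' * (c ^ γ * c ^ γ')))]
  rw [comm_shift ((hcb.symm.zpow_zpow β (β * α'))) (b ^ β' * (c ^ γ * c ^ γ'))]
  rw [comm_shift ((hcb.symm.zpow_zpow β' (β * α'))) (c ^ γ * c ^ γ')]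
  rw [comm_shift ((Commute.refl c).zpow_zpow γ (β * α')) (c ^ γ')]
  rw [((Commute.refl c).zpow_zpow (β * α') γ').eq]

lemma nf_inv (α β γ : ℤ) : (nf a b c α β γ)⁻¹ = nf a b c (-α) (-β) (β * α - γ) := by
  apply inv_eq_of_mul_eq_one_right
  rw [L3 hba hca hcb]
  rw [show α + -α = 0 by ring, show β + -β = 0 by ring,
    show γ + (β * α - γ) + β * -α = 0 by ring]
  simp [nf]

omit hba hca hcb in
lemma nf_shift (α β γ t : ℤ) : nf a b c α β (γ + t) = nf a b c α β γ * c ^ t := by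
  unfold nf
  rw [zpow_add]
  simp only [mul_assoc]

omit hba hca hcb in
lemma nf_a : a = nf a b c 1 0 0 := by simp [nf]
omit hba hca hcb in
lemma nf_b : b = nf a b c 0 1 0 := by simp [nf]
omit hba hca hcb in
lemma nf_c : c = nf a b c 0 0 1 := by simp [nf]
omit hba hca hcb in
lemma nf_one_nf : (1 : G) = nf a b c 0 0 0 := by simp [nf]

omit hba hca hcb in
lemma nf_cancel {A B C₁ C₂ : ℤ} (h : nf a b c A B C₁ = nf a b c A B C₂) : c ^ (C₁ - C₂) = 1 := by
  unfold nf at h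
  have h1 := mul_left_cancel (mul_left_cancel h)
  rw [zpow_sub, h1]
  simp

lemma nf_exists (htop : Subgroup.closure ({a, b} : Set G) = ⊤) (x : G) :
    ∃ α β γ : ℤ, x = nf a b c α β γ := by
  have hx : x ∈ Subgroup.closure ({a, b} : Set G) := htop ▸ Subgroup.mem_top x
  induction hx using Subgroup.closure_induction with
  | mem g hg =>
      rcases hg with rfl | rfl
      · exact ⟨1, 0, 0, nf_a⟩
      · exact ⟨0, 1, 0, nf_b⟩
  | one => exact ⟨0, 0, 0, nf_one_nf⟩
  | mul g h _ _ ihg ihh =>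
      obtain ⟨α, β, γ, rfl⟩ := ihg
      obtain ⟨α', β', γ', rfl⟩ := ihh
      exact ⟨_, _, _, L3 hba hca hcb α β γ α' β' γ'⟩
  | inv g _ ihg =>
      obtain ⟨α, β, γ, rfl⟩ := ihg
      exact ⟨_, _, _, nf_inv hba hca hcb α β γ⟩

omit hba hca hcb in
lemma nf_eq_of {A B C₁ C₂ : ℤ} (h : c ^ (C₁ - C₂) = 1) :
    nf a b c A B C₁ = nf a b c A B C₂ := by
  have hC : C₁ = C₂ + (C₁ - C₂) := by ring
  rw [hC, nf_shift, h, mul_one]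

lemma nf_central (htop : Subgroup.closure ({a, b} : Set G) = ⊤) {α β : ℤ} (γ : ℤ)
    (hα : c ^ α = 1) (hβ : c ^ β = 1) : nf a b c α β γ ∈ Subgroup.center G := by
  rw [Subgroup.mem_center_iff]
  intro g
  obtain ⟨α', β', γ', rfl⟩ := nf_exists hba hca hcb htop g
  rw [L3 hba hca hcb, L3 hba hca hcb, add_comm α' α, add_comm β' β]
  apply nf_eq_of
  rw [show γ' + γ + β' * α - (γ + γ' + β * α') = α * β' + -(β * α') by ring,
    zpow_add, zpow_mul, hα, zpow_neg, zpow_mul, hβ]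
  simp

lemma central_nf {α β γ : ℤ} (hx : nf a b c α β γ ∈ Subgroup.center G) :
    c ^ α = 1 ∧ c ^ β = 1 := by
  rw [Subgroup.mem_center_iff] at hx
  constructor
  · have hb' := hx (nf a b c 0 1 0)
    rw [L3 hba hca hcb, L3 hba hca hcb] at hb'
    have := nf_cancel (A := 0 + α) (B := 1 + β) (hb'.trans
      (by rw [add_comm α 0, add_comm β 1, show γ + 0 + β * 0 = 0 + γ + 0 by ring]))
    rwa [show 0 + γ + 1 * α - (0 + γ + 0) = α by ring] at this
  · have ha' := hx (nf a b c 1 0 0)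
    rw [L3 hba hca hcb, L3 hba hca hcb] at ha'
    have := nf_cancel (A := 1 + α) (B := 0 + β) (ha'.trans
      (by rw [add_comm α 1, add_comm β 0, show γ + 0 + β * 1 = 0 + γ + β * 1 by ring]))
    rwa [show 0 + γ + 0 * α - (0 + γ + β * 1) = -β by ring, ← inv_eq_one, ← zpow_neg, neg_neg]
      at this

lemma nf_pow (α β γ : ℤ) (n : ℕ) :
    ∃ δ : ℤ, (nf a b c α β γ) ^ n = nf a b c (n * α) (n * β) δ := by
  induction n with
  | zero => exact ⟨0, by rw [pow_zero, show ((0:ℕ):ℤ) * α = 0 by ring,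
      show ((0:ℕ):ℤ) * β = 0 by ring]; exact nf_one_nf⟩
  | succ n ih =>
      obtain ⟨δ, hδ⟩ := ih
      refine ⟨δ + γ + n * β * α, ?_⟩
      rw [pow_succ, hδ, L3 hba hca hcb,
        show (n:ℤ) * α + α = ((n:ℕ)+1 : ℤ) * α by ring,
        show (n:ℤ) * β + β = ((n:ℕ)+1 : ℤ) * β by ring]
      norm_num

end Generic

lemma mk_rel_one {α : Type*} {rels : Set (FreeGroup α)} {r : FreeGroup α} (hr : r ∈ rels) :
    PresentedGroup.mk rels r = 1 :=
  (QuotientGroup.eq_one_iff r).2 (Subgroup.subset_normalClosure hr)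

lemma zpowers_normal_of_comm {G : Type*} [Group G] {z : G} (h : ∀ g, Commute z g) :
    (Subgroup.zpowers z).Normal := by
  constructor
  rintro - ⟨m, rfl⟩ g
  have : g * z ^ m * g⁻¹ = z ^ m := by
    rw [((h g).zpow_left m).symm.eq, mul_inv_cancel_right]
  rw [this]
  exact ⟨m, rfl⟩

lemma dvd_cancel_pow {p : ℕ} (hp : (p : ℤ) ≠ 0) {u v : ℕ} {x : ℤ}
    (h : (p : ℤ) ^ (u + v) ∣ (p : ℤ) ^ v * x) : (p : ℤ) ^ u ∣ x := by
  rw [pow_add, mul_comm ((p:ℤ)^u)] at h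
  exact (mul_dvd_mul_iff_left (pow_ne_zero v hp)).1 h

lemma zpow_congr {G : Type*} [Group G] {x : G} {T : ℕ} (hT : x ^ T = 1) {m m' : ℤ}
    (h : (T : ℤ) ∣ m - m') : x ^ m = x ^ m' := by
  obtain ⟨t, ht⟩ := h
  have hm : m = m' + (T : ℤ) * t := by linarith [ht]
  rw [hm, zpow_add, zpow_mul, zpow_natCast, hT, one_zpow, mul_one]

lemma int_eq_of_small_dvd {A : ℕ} {d : ℤ} (h : (A : ℤ) ∣ d) (h1 : -(A:ℤ) < d) (h2 : d < A) :
    d = 0 :=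
  Int.eq_zero_of_abs_lt_dvd h (abs_lt.2 ⟨h1, h2⟩)

end Stmt6Aux

namespace Beauville

variable {G : Type*} [Group G]

open Stmt6Aux

section Statements

theorem statement6 (p e i j k : ℕ) (hp : p.Prime) (hodd : Odd p)
    (hk : 0 < k) (hkj : k < j) (hji : j ≤ i) (hie : i ≤ e) (he : e = i + j - k) :
    Subgroup.center (HGroup p e i j k) =
      powSubgroup (HGroup p e i j k) (p ^ j) ⊔ commutator (HGroup p e i j k) ∧
    Nat.card (Subgroup.center (HGroup p e i j k)) = p ^ (e + i - j) := by
  have hpne : (p : ℤ) ≠ 0 := by exact_mod_cast hp.pos.ne'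
  haveI hfact : Fact ((p ^ j : ℕ) ∣ p ^ e) := ⟨pow_dvd_pow p (hji.trans hie)⟩
  -- elements
  set G := HGroup p e i j k
  set a : G := ha p e i j k with ha_def
  set b : G := hb p e i j k with hb_def
  set c : G := ⁅b, a⁆ with hc_def
  have mk_a : a = PresentedGroup.mk (HRels p e i j k) fA := rfl
  have mk_b : b = PresentedGroup.mk (HRels p e i j k) fB := rfl
  have mk_c : c = PresentedGroup.mk (HRels p e i j k) ⁅fB, fA⁆ := by
    rw [hc_def, mk_a, mk_b, map_commutatorElement]
  -- relations
  have rel1 : a ^ (p ^ e) = 1 := by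
    rw [mk_a, ← map_pow]
    exact mk_rel_one (by simp [HRels])
  have rel2 : c ^ (p ^ j) = 1 := by
    rw [mk_c, ← map_pow]
    exact mk_rel_one (by simp [HRels])
  have hca : Commute c a := by
    rw [← commutatorElement_eq_one_iff_commute, mk_c, mk_a, ← map_commutatorElement]
    exact mk_rel_one (by simp [HRels])
  have hcb : Commute c b := by
    rw [← commutatorElement_eq_one_iff_commute, mk_c, mk_b, ← map_commutatorElement]
    exact mk_rel_one (by simp [HRels])
  have rel5 : b ^ (p ^ i) = c ^ (p ^ k) := by
    have h1 : PresentedGroup.mk (HRels p e i j k) (fB ^ p ^ i * (⁅fB, fA⁆ ^ p ^ k)⁻¹) = 1 :=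
      mk_rel_one (by simp [HRels])
    rw [map_mul, map_inv, map_pow, map_pow, mul_inv_eq_one] at h1
    rw [mk_b, mk_c, h1]
  have hba : b * a = c * (a * b) := by
    rw [hc_def, commutatorElement_def]
    group
  have htop : Subgroup.closure ({a, b} : Set G) = ⊤ := by
    rw [← PresentedGroup.closure_range_of (HRels p e i j k)]
    congr 1
    ext x
    constructor
    · rintro (rfl | rfl)
      exacts [⟨true, rfl⟩, ⟨false, rfl⟩]
    · rintro ⟨(_ | _), rfl⟩
      · right; rfl
      · left; rfl
  -- model
  have hpk0 : ((p ^ i : ℕ) : ZMod (p ^ j)) = 0 :=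
    (ZMod.natCast_eq_zero_iff _ _).2 (pow_dvd_pow p hji)
  set zel : KT (p ^ e) (p ^ j) :=
    ⟨0, ((p ^ i : ℕ) : ZMod (p ^ e)), -((p ^ k : ℕ) : ZMod (p ^ j))⟩ with zel_def
  have hzel_comm : ∀ u : KT (p ^ e) (p ^ j), Commute zel u := by
    intro u
    show zel * u = u * zel
    rw [zel_def]
    ext
    · show (0 : ZMod (p ^ e)) + u.x = u.x + 0
      ring
    · show _ + u.y = u.y + _
      ring
    · show _ + u.z + cst ((p ^ i : ℕ) : ZMod (p ^ e)) * cst u.x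
          = u.z + _ + cst u.y * cst (0 : ZMod (p ^ e))
      rw [map_natCast, map_zero, hpk0]
      ring
  haveI hnormal : (Subgroup.zpowers zel).Normal := zpowers_normal_of_comm hzel_comm
  set mkQ : KT (p ^ e) (p ^ j) →* (KT (p ^ e) (p ^ j) ⧸ Subgroup.zpowers zel) :=
    QuotientGroup.mk' _ with mkQ_def
  have zel_pow : ∀ m : ℤ, zel ^ m =
      (⟨0, m • ((p ^ i : ℕ) : ZMod (p ^ e)), m • (-((p ^ k : ℕ) : ZMod (p ^ j)))⟩ :
        KT (p ^ e) (p ^ j)) := fun m => by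
    rw [zel_def]; exact kzpow_x0 _ _ m
  have haK : (aK : KT (p ^ e) (p ^ j)) ^ (p ^ e : ℕ) = 1 := by
    rw [← zpow_natCast, aK_zpow]
    show (⟨_, _, _⟩ : KT _ _) = ⟨0, 0, 0⟩
    rw [Int.cast_natCast, ZMod.natCast_self]
  have hcK : (cK : KT (p ^ e) (p ^ j)) ^ (p ^ j : ℕ) = 1 := by
    rw [← zpow_natCast, cK_zpow]
    show (⟨_, _, _⟩ : KT _ _) = ⟨0, 0, 0⟩
    rw [Int.cast_natCast, ZMod.natCast_self]
  have hcKa : Commute (cK : KT (p ^ e) (p ^ j)) aK := by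
    show cK * aK = aK * cK
    ext <;> simp [kmul_def, aK, cK]
  have hcKb : Commute (cK : KT (p ^ e) (p ^ j)) bK := by
    show cK * bK = bK * cK
    ext <;> simp [kmul_def, bK, cK]
  have hbKrel : (bK : KT (p ^ e) (p ^ j)) ^ (p ^ i : ℕ) * ((cK ^ (p ^ k : ℕ)) : KT _ _)⁻¹
      = zel := by
    rw [← zpow_natCast, ← zpow_natCast, bK_zpow, cK_zpow, zel_def]
    ext
    · show (0 : ZMod (p ^ e)) + -(0 : ZMod (p ^ e)) = 0
      ring
    · show _ + -(0 : ZMod (p ^ e)) = _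
      rw [Int.cast_natCast]
      ring
    · show (0 : ZMod (p ^ j)) + (-_ + cst (0 : ZMod (p ^ e)) * cst (0 : ZMod (p ^ e)))
          + cst _ * cst (-(0 : ZMod (p ^ e))) = -_
      rw [Int.cast_natCast]
      simp
  have hrels : ∀ r ∈ HRels p e i j k,
      (FreeGroup.lift fun t => cond t (mkQ aK) (mkQ bK)) r = 1 := by
    intro r hr
    have hΦc : (FreeGroup.lift fun t => cond t (mkQ aK) (mkQ bK)) ⁅fB, fA⁆ = mkQ cK := by
      rw [map_commutatorElement]
      show ⁅(FreeGroup.lift _) (FreeGroup.of false), (FreeGroup.lift _) (FreeGroup.of true)⁆ = _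
      rw [FreeGroup.lift_apply_of, FreeGroup.lift_apply_of]
      show ⁅mkQ bK, mkQ aK⁆ = mkQ cK
      rw [← map_commutatorElement, commK]
    simp only [HRels, Set.mem_insert_iff, Set.mem_singleton_iff] at hr
    rcases hr with rfl | rfl | rfl | rfl | rfl
    · rw [map_pow]
      show ((FreeGroup.lift _) (FreeGroup.of true)) ^ (p ^ e) = 1
      rw [FreeGroup.lift_apply_of]
      show (mkQ aK) ^ (p ^ e) = 1
      rw [← map_pow, haK, map_one]
    · rw [map_pow, hΦc, ← map_pow, hcK, map_one]
    · rw [map_commutatorElement, hΦc]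
      show ⁅_, (FreeGroup.lift _) (FreeGroup.of true)⁆ = 1
      rw [FreeGroup.lift_apply_of]
      show ⁅mkQ cK, mkQ aK⁆ = 1
      rw [← map_commutatorElement, commutatorElement_eq_one_iff_commute.2 hcKa, map_one]
    · rw [map_commutatorElement, hΦc]
      show ⁅_, (FreeGroup.lift _) (FreeGroup.of false)⁆ = 1
      rw [FreeGroup.lift_apply_of]
      show ⁅mkQ cK, mkQ bK⁆ = 1
      rw [← map_commutatorElement, commutatorElement_eq_one_iff_commute.2 hcKb, map_one]
    · rw [map_mul, map_inv, map_pow, map_pow, hΦc]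
      show ((FreeGroup.lift _) (FreeGroup.of false)) ^ (p ^ i) * ((mkQ cK) ^ (p ^ k))⁻¹ = 1
      rw [FreeGroup.lift_apply_of]
      show (mkQ bK) ^ (p ^ i) * ((mkQ cK) ^ (p ^ k))⁻¹ = 1
      rw [← map_pow, ← map_pow, ← map_inv, ← map_mul, hbKrel]
      exact (QuotientGroup.eq_one_iff _).2 (Subgroup.mem_zpowers zel)
  set φ : G →* (KT (p ^ e) (p ^ j) ⧸ Subgroup.zpowers zel) :=
    PresentedGroup.toGroup hrels with φ_def
  have φa : φ a = mkQ aK := PresentedGroup.toGroup.of hrels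
  have φb : φ b = mkQ bK := PresentedGroup.toGroup.of hrels
  have φc : φ c = mkQ cK := by
    rw [hc_def, map_commutatorElement, φa, φb, ← map_commutatorElement, commK]
  have φnf : ∀ α β γ : ℤ, φ (Stmt6Aux.nf a b c α β γ)
      = mkQ ⟨(α : ZMod (p ^ e)), (β : ZMod (p ^ e)), (γ : ZMod (p ^ j))⟩ := by
    intro α β γ
    show φ (a ^ α * (b ^ β * c ^ γ)) = _
    rw [map_mul, map_mul, map_zpow, map_zpow, map_zpow, φa, φb, φc,
      ← map_zpow mkQ, ← map_zpow mkQ, ← map_zpow mkQ, ← map_mul, ← map_mul, ← mul_assoc, abcK]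
  have extract : ∀ α β γ : ℤ, Stmt6Aux.nf a b c α β γ = 1 → ∃ m : ℤ,
      (α : ZMod (p ^ e)) = 0 ∧
      (β : ZMod (p ^ e)) = ((m * p ^ i : ℤ) : ZMod (p ^ e)) ∧
      (γ : ZMod (p ^ j)) = ((-(m * p ^ k) : ℤ) : ZMod (p ^ j)) := by
    intro α β γ h
    have h1 : φ (Stmt6Aux.nf a b c α β γ) = 1 := by rw [h, map_one]
    rw [φnf] at h1
    have h2 : (⟨(α : ZMod (p ^ e)), (β : ZMod (p ^ e)), (γ : ZMod (p ^ j))⟩ : KT _ _)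
        ∈ Subgroup.zpowers zel := (QuotientGroup.eq_one_iff _).1 h1
    obtain ⟨m, hm⟩ := Subgroup.mem_zpowers_iff.1 h2
    rw [zel_pow] at hm
    rw [KT.mk.injEq] at hm
    obtain ⟨hm1, hm2, hm3⟩ := hm
    refine ⟨m, hm1.symm, ?_, ?_⟩
    · rw [← hm2, zsmul_eq_mul]
      push_cast
      ring
    · rw [← hm3, zsmul_eq_mul]
      push_cast
      ring
  -- divisibility consequences
  have hpow_jk : ((p:ℤ)) ^ (j - k) * ((p:ℤ)) ^ k = ((p:ℤ)) ^ j := by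
    rw [← pow_add]; congr 1; omega
  have F1 : ∀ n : ℤ, c ^ n = 1 → ((p:ℤ) ^ j) ∣ n := by
    intro n hn
    have h0 : Stmt6Aux.nf a b c 0 0 n = 1 := by
      show a ^ (0:ℤ) * (b ^ (0:ℤ) * c ^ n) = 1
      simp [hn]
    obtain ⟨m, _, h2, h3⟩ := extract 0 0 n h0
    have d2 : ((p^e : ℕ) : ℤ) ∣ (m * p ^ i - 0) := ((ZMod.intCast_eq_intCast_iff _ _ _).1 h2).dvd
    rw [sub_zero] at d2
    push_cast at d2
    rw [show e = (e - i) + i by omega] at d2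
    have d2' : ((p:ℤ)) ^ (e - i) ∣ m := dvd_cancel_pow hpne (by rwa [mul_comm] at d2)
    rw [show e - i = j - k by omega] at d2'
    obtain ⟨m', rfl⟩ := d2'
    have d3 : ((p^j : ℕ) : ℤ) ∣ (-(((p:ℤ))^(j-k) * m' * p ^ k) - n) :=
      ((ZMod.intCast_eq_intCast_iff _ _ _).1 h3).dvd
    push_cast at d3
    have d4 : ((p:ℤ))^j ∣ ((p:ℤ))^(j-k) * m' * (p:ℤ) ^ k := ⟨m', by rw [← hpow_jk]; ring⟩
    simpa using ((dvd_neg.mpr d4).sub d3)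
  have hcmul : ∀ t : ℤ, c ^ (((p ^ j : ℕ) : ℤ) * t) = 1 := fun t => by
    rw [zpow_mul, zpow_natCast, rel2, one_zpow]
  have hcmul' : ∀ t : ℤ, c ^ ((p:ℤ) ^ j * t) = 1 := fun t => by
    rw [show ((p:ℤ))^j = ((p^j : ℕ) : ℤ) by push_cast; ring]
    exact hcmul t
  have hc_center : c ∈ Subgroup.center G := by
    have h := nf_central hba hca hcb htop (α := 0) (β := 0) 1 (zpow_zero c) (zpow_zero c)
    rwa [← nf_c] at h
  -- part 1
  have part1 : Subgroup.center G = powSubgroup G (p ^ j) ⊔ commutator G := by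
    apply le_antisymm
    · intro x hx
      obtain ⟨α, β, γ, rfl⟩ := nf_exists hba hca hcb htop x
      obtain ⟨hcα, hcβ⟩ := central_nf hba hca hcb hx
      obtain ⟨α₀, rfl⟩ := F1 α hcα
      obtain ⟨β₀, rfl⟩ := F1 β hcβ
      show a ^ _ * (b ^ _ * c ^ γ) ∈ _
      have hpa : a ^ ((p:ℤ) ^ j * α₀) = (a ^ α₀) ^ (p ^ j : ℕ) := by
        rw [← zpow_natCast (a ^ α₀), ← zpow_mul]
        congr 1
        push_cast
        ring
      have hpb : b ^ ((p:ℤ) ^ j * β₀) = (b ^ β₀) ^ (p ^ j : ℕ) := by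
        rw [← zpow_natCast (b ^ β₀), ← zpow_mul]
        congr 1
        push_cast
        ring
      refine Subgroup.mul_mem _ (Subgroup.mem_sup_left ?_)
        (Subgroup.mul_mem _ (Subgroup.mem_sup_left ?_) (Subgroup.mem_sup_right ?_))
      · rw [hpa]
        exact Subgroup.subset_closure ⟨a ^ α₀, rfl⟩
      · rw [hpb]
        exact Subgroup.subset_closure ⟨b ^ β₀, rfl⟩
      · rw [_root_.commutator_def]
        exact Subgroup.zpow_mem _
          (Subgroup.commutator_mem_commutator (Subgroup.mem_top b) (Subgroup.mem_top a)) γ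
    · apply sup_le
      · rw [powSubgroup, Subgroup.closure_le]
        rintro x ⟨g, rfl⟩
        obtain ⟨α, β, γ, rfl⟩ := nf_exists hba hca hcb htop g
        obtain ⟨δ, hδ⟩ := nf_pow hba hca hcb α β γ (p ^ j)
        show (Stmt6Aux.nf a b c α β γ) ^ (p ^ j) ∈ (Subgroup.center G : Set G)
        rw [hδ]
        exact nf_central hba hca hcb htop δ (hcmul α) (hcmul β)
      · rw [_root_.commutator_def, Subgroup.commutator_le]
        intro g _ h _
        obtain ⟨α, β, γ, rfl⟩ := nf_exists hba hca hcb htop g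
        obtain ⟨α', β', γ', rfl⟩ := nf_exists hba hca hcb htop h
        have hcs : c ^ (β * α' - β' * α) ∈ Subgroup.center G :=
          Subgroup.zpow_mem _ hc_center _
        have e1 : Stmt6Aux.nf a b c α β γ * Stmt6Aux.nf a b c α' β' γ'
            = (Stmt6Aux.nf a b c α' β' γ' * Stmt6Aux.nf a b c α β γ)
              * c ^ (β * α' - β' * α) := by
          rw [L3 hba hca hcb, L3 hba hca hcb, ← nf_shift, add_comm α' α, add_comm β' β,
            show γ' + γ + β' * α + (β * α' - β' * α) = γ + γ' + β * α' by ring]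
        have e2 : ⁅Stmt6Aux.nf a b c α β γ, Stmt6Aux.nf a b c α' β' γ'⁆
            = c ^ (β * α' - β' * α) := by
          rw [commutatorElement_def,
            show Stmt6Aux.nf a b c α β γ * Stmt6Aux.nf a b c α' β' γ'
              * (Stmt6Aux.nf a b c α β γ)⁻¹ * (Stmt6Aux.nf a b c α' β' γ')⁻¹
              = (Stmt6Aux.nf a b c α β γ * Stmt6Aux.nf a b c α' β' γ')
              * (Stmt6Aux.nf a b c α' β' γ' * Stmt6Aux.nf a b c α β γ)⁻¹ by group,
            e1, Subgroup.mem_center_iff.1 hcs _, mul_inv_cancel_right]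
        rw [e2]
        exact hcs
  -- part 2: cardinality
  haveI nz1 : NeZero (p ^ (e - j)) := ⟨pow_ne_zero _ hp.pos.ne'⟩
  haveI nz2 : NeZero (p ^ (i - j)) := ⟨pow_ne_zero _ hp.pos.ne'⟩
  haveI nz3 : NeZero (p ^ j) := ⟨pow_ne_zero _ hp.pos.ne'⟩
  have ca : ∀ {m m' : ℤ}, ((p:ℤ) ^ e) ∣ m - m' → a ^ m = a ^ m' := by
    intro m m' hd
    refine zpow_congr rel1 ?_
    rw [show ((p ^ e : ℕ) : ℤ) = (p:ℤ) ^ e by push_cast; ring]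
    exact hd
  have cc : ∀ {m m' : ℤ}, ((p:ℤ) ^ j) ∣ m - m' → c ^ m = c ^ m' := by
    intro m m' hd
    refine zpow_congr rel2 ?_
    rw [show ((p ^ j : ℕ) : ℤ) = (p:ℤ) ^ j by push_cast; ring]
    exact hd
  have nf_eq_extract : ∀ A B C A' B' C' : ℤ,
      Stmt6Aux.nf a b c A B C = Stmt6Aux.nf a b c A' B' C' →
      ∃ m : ℤ, ((-A + A' : ℤ) : ZMod (p ^ e)) = 0 ∧
        ((-B + B' : ℤ) : ZMod (p ^ e)) = ((m * p ^ i : ℤ) : ZMod (p ^ e)) ∧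
        ((B * A - C + C' + -B * A' : ℤ) : ZMod (p ^ j))
          = ((-(m * p ^ k) : ℤ) : ZMod (p ^ j)) := by
    intro A B C A' B' C' h0
    apply extract
    rw [← L3 hba hca hcb, ← nf_inv hba hca hcb, h0, inv_mul_cancel]
  have memF : ∀ t : ZMod (p ^ (e - j)) × ZMod (p ^ (i - j)) × ZMod (p ^ j),
      Stmt6Aux.nf a b c ((p:ℤ) ^ j * (t.1.val : ℤ)) ((p:ℤ) ^ j * (t.2.1.val : ℤ))
        ((t.2.2.val : ℤ)) ∈ Subgroup.center G :=
    fun t => nf_central hba hca hcb htop _ (hcmul' _) (hcmul' _)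
  set f : ZMod (p ^ (e - j)) × ZMod (p ^ (i - j)) × ZMod (p ^ j) → Subgroup.center G :=
    fun t => ⟨_, memF t⟩ with f_def
  have hinj : Function.Injective f := by
    rintro ⟨u, v, w⟩ ⟨u', v', w'⟩ h
    have h0 : Stmt6Aux.nf a b c ((p:ℤ) ^ j * (u.val : ℤ)) ((p:ℤ) ^ j * (v.val : ℤ))
        ((w.val : ℤ)) = Stmt6Aux.nf a b c ((p:ℤ) ^ j * (u'.val : ℤ))
        ((p:ℤ) ^ j * (v'.val : ℤ)) ((w'.val : ℤ)) := congrArg Subtype.val h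
    obtain ⟨m, E1, E2, E3⟩ := nf_eq_extract _ _ _ _ _ _ h0
    -- first coordinate
    have d1 : ((p ^ e : ℕ) : ℤ) ∣ -((p:ℤ) ^ j * (u.val : ℤ)) + (p:ℤ) ^ j * (u'.val : ℤ) :=
      (ZMod.intCast_zmod_eq_zero_iff_dvd _ _).1 E1
    push_cast at d1
    have d1' : ((p:ℤ)) ^ ((e - j) + j) ∣ ((p:ℤ)) ^ j * ((u'.val : ℤ) - (u.val : ℤ)) := by
      rw [show (e - j) + j = e by omega,
        show ((p:ℤ)) ^ j * ((u'.val : ℤ) - (u.val : ℤ))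
          = -((p:ℤ) ^ j * (u.val : ℤ)) + (p:ℤ) ^ j * (u'.val : ℤ) by ring]
      exact d1
    have d1'' : ((p:ℤ)) ^ (e - j) ∣ ((u'.val : ℤ) - (u.val : ℤ)) := dvd_cancel_pow hpne d1'
    have hb1 : (u.val : ℤ) < ((p ^ (e - j) : ℕ) : ℤ) := by exact_mod_cast ZMod.val_lt u
    have hb2 : (u'.val : ℤ) < ((p ^ (e - j) : ℕ) : ℤ) := by exact_mod_cast ZMod.val_lt u'
    have hz1 : (u'.val : ℤ) - (u.val : ℤ) = 0 := by
      refine int_eq_of_small_dvd (A := p ^ (e - j)) (by push_cast; exact d1'') ?_ ?_ <;> omega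
    have hu : u = u' := ZMod.val_injective _ (by omega)
    -- second coordinate
    have d2 : ((p ^ e : ℕ) : ℤ) ∣ (m * p ^ i) - (-((p:ℤ) ^ j * (v.val : ℤ))
        + (p:ℤ) ^ j * (v'.val : ℤ)) := ((ZMod.intCast_eq_intCast_iff _ _ _).1 E2).dvd
    push_cast at d2
    have hpe_cast : ((p ^ e : ℕ) : ℤ) = (p:ℤ) ^ e := by push_cast; ring
    have d2i : ((p:ℤ)) ^ i ∣ ((p:ℤ)) ^ j * ((v'.val : ℤ) - (v.val : ℤ)) := by
      have hie' : ((p:ℤ)) ^ i ∣ ((p:ℤ)) ^ e := pow_dvd_pow _ hie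
      have h1 : ((p:ℤ)) ^ i ∣ m * (p:ℤ) ^ i := dvd_mul_left _ _
      have h2 := dvd_sub h1 (hie'.trans d2)
      rw [show m * (p:ℤ) ^ i - (m * (p:ℤ) ^ i - (-((p:ℤ) ^ j * (v.val : ℤ))
        + (p:ℤ) ^ j * (v'.val : ℤ))) = ((p:ℤ)) ^ j * ((v'.val : ℤ) - (v.val : ℤ)) by ring] at h2
      exact h2
    have d2i' : ((p:ℤ)) ^ ((i - j) + j) ∣ ((p:ℤ)) ^ j * ((v'.val : ℤ) - (v.val : ℤ)) := by
      rw [show (i - j) + j = i by omega]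
      exact d2i
    have d2'' : ((p:ℤ)) ^ (i - j) ∣ ((v'.val : ℤ) - (v.val : ℤ)) := dvd_cancel_pow hpne d2i'
    have hb3 : (v.val : ℤ) < ((p ^ (i - j) : ℕ) : ℤ) := by exact_mod_cast ZMod.val_lt v
    have hb4 : (v'.val : ℤ) < ((p ^ (i - j) : ℕ) : ℤ) := by exact_mod_cast ZMod.val_lt v'
    have hz2 : (v'.val : ℤ) - (v.val : ℤ) = 0 := by
      refine int_eq_of_small_dvd (A := p ^ (i - j)) (by push_cast; exact d2'') ?_ ?_ <;> omega
    have hv : v = v' := ZMod.val_injective _ (by omega)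
    -- m is divisible by p^(j-k)
    have d2e : ((p:ℤ)) ^ e ∣ m * (p:ℤ) ^ i := by
      have := d2
      rw [show m * (p:ℤ) ^ i - (-((p:ℤ) ^ j * (v.val : ℤ)) + (p:ℤ) ^ j * (v'.val : ℤ))
        = m * (p:ℤ) ^ i - (p:ℤ) ^ j * ((v'.val : ℤ) - (v.val : ℤ)) by ring, hz2] at this
      simpa using this
    have d2e' : ((p:ℤ)) ^ ((j - k) + i) ∣ (p:ℤ) ^ i * m := by
      rw [show (j - k) + i = e by omega, mul_comm]
      exact d2e
    have dm : ((p:ℤ)) ^ (j - k) ∣ m := dvd_cancel_pow hpne d2e'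
    obtain ⟨m', rfl⟩ := dm
    -- third coordinate
    have d3 : ((p ^ j : ℕ) : ℤ) ∣ (-(((p:ℤ)) ^ (j - k) * m' * p ^ k))
        - (((p:ℤ) ^ j * (v.val : ℤ)) * ((p:ℤ) ^ j * (u.val : ℤ)) - (w.val : ℤ)
          + (w'.val : ℤ) + -((p:ℤ) ^ j * (v.val : ℤ)) * ((p:ℤ) ^ j * (u'.val : ℤ))) :=
      ((ZMod.intCast_eq_intCast_iff _ _ _).1 E3).dvd
    push_cast at d3
    have d3' : ((p:ℤ)) ^ j ∣ ((w'.val : ℤ) - (w.val : ℤ)) := by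
      have h6 : ((p:ℤ)) ^ j ∣ (((p:ℤ)) ^ (j - k) * m' * (p:ℤ) ^ k) :=
        ⟨m', by rw [← hpow_jk]; ring⟩
      have h7 : ((p:ℤ)) ^ j ∣ ((p:ℤ) ^ j * (v.val : ℤ)) * ((p:ℤ) ^ j * (u.val : ℤ)) :=
        ⟨(v.val : ℤ) * ((p:ℤ) ^ j * (u.val : ℤ)), by ring⟩
      have h8 : ((p:ℤ)) ^ j ∣ ((p:ℤ) ^ j * (v.val : ℤ)) * ((p:ℤ) ^ j * (u'.val : ℤ)) :=
        ⟨(v.val : ℤ) * ((p:ℤ) ^ j * (u'.val : ℤ)), by ring⟩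
      have h9 := ((dvd_neg.2 h6).sub d3).sub (h7.sub h8)
      exact h9.trans (dvd_of_eq (by ring))
    have hb5 : (w.val : ℤ) < ((p ^ j : ℕ) : ℤ) := by exact_mod_cast ZMod.val_lt w
    have hb6 : (w'.val : ℤ) < ((p ^ j : ℕ) : ℤ) := by exact_mod_cast ZMod.val_lt w'
    have hz3 : (w'.val : ℤ) - (w.val : ℤ) = 0 := by
      refine int_eq_of_small_dvd (A := p ^ j) (by push_cast; exact d3') ?_ ?_ <;> omega
    have hw : w = w' := ZMod.val_injective _ (by omega)
    simp [Prod.ext_iff]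
    exact ⟨hu, hv, hw⟩
  -- surjectivity
  have hpow_ij : ((p:ℤ)) ^ j * ((p:ℤ)) ^ (i - j) = ((p:ℤ)) ^ i := by
    rw [← pow_add]; congr 1; omega
  have hpow_ej : ((p:ℤ)) ^ j * ((p:ℤ)) ^ (e - j) = ((p:ℤ)) ^ e := by
    rw [← pow_add]; congr 1; omega
  have hb_pi : b ^ ((p:ℤ) ^ i) = c ^ ((p:ℤ) ^ k) := by
    rw [show (p:ℤ) ^ i = ((p ^ i : ℕ) : ℤ) by push_cast; ring,
      show (p:ℤ) ^ k = ((p ^ k : ℕ) : ℤ) by push_cast; ring,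
      zpow_natCast, zpow_natCast, rel5]
  have hsurj : Function.Surjective f := by
    rintro ⟨x, hx⟩
    obtain ⟨α, β, γ, rfl⟩ := nf_exists hba hca hcb htop x
    obtain ⟨hcα, hcβ⟩ := central_nf hba hca hcb hx
    obtain ⟨α₀, rfl⟩ := F1 α hcα
    obtain ⟨β₀, rfl⟩ := F1 β hcβ
    set u : ZMod (p ^ (e - j)) := ((α₀ : ℤ) : ZMod (p ^ (e - j))) with u_def
    set v : ZMod (p ^ (i - j)) := ((β₀ : ℤ) : ZMod (p ^ (i - j))) with v_def
    have hud : ((p:ℤ)) ^ (e - j) ∣ α₀ - (u.val : ℤ) := by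
      have h1 : ((u.val : ℤ) : ZMod (p ^ (e - j))) = ((α₀ : ℤ) : ZMod (p ^ (e - j))) := by
        rw [u_def, Int.cast_natCast, ZMod.natCast_val, ZMod.cast_id]
      have h2 := ((ZMod.intCast_eq_intCast_iff _ _ _).1 h1).dvd
      push_cast at h2
      exact h2
    have hvd : ((p:ℤ)) ^ (i - j) ∣ β₀ - (v.val : ℤ) := by
      have h1 : ((v.val : ℤ) : ZMod (p ^ (i - j))) = ((β₀ : ℤ) : ZMod (p ^ (i - j))) := by
        rw [v_def, Int.cast_natCast, ZMod.natCast_val, ZMod.cast_id]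
      have h2 := ((ZMod.intCast_eq_intCast_iff _ _ _).1 h1).dvd
      push_cast at h2
      exact h2
    obtain ⟨tα, htα⟩ := hud
    obtain ⟨tβ, htβ⟩ := hvd
    set w : ZMod (p ^ j) := ((γ + (p:ℤ) ^ k * tβ : ℤ) : ZMod (p ^ j)) with w_def
    have hwd : ((p:ℤ)) ^ j ∣ (w.val : ℤ) - (γ + (p:ℤ) ^ k * tβ) := by
      have h1 : ((w.val : ℤ) : ZMod (p ^ j)) = ((γ + (p:ℤ) ^ k * tβ : ℤ) : ZMod (p ^ j)) := by
        rw [w_def, Int.cast_natCast, ZMod.natCast_val, ZMod.cast_id]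
      have h2 := ((ZMod.intCast_eq_intCast_iff _ _ _).1 h1.symm).dvd
      push_cast at h2 ⊢
      exact h2
    refine ⟨(u, v, w), ?_⟩
    apply Subtype.ext
    show Stmt6Aux.nf a b c ((p:ℤ) ^ j * (u.val : ℤ)) ((p:ℤ) ^ j * (v.val : ℤ)) ((w.val : ℤ))
      = Stmt6Aux.nf a b c ((p:ℤ) ^ j * α₀) ((p:ℤ) ^ j * β₀) γ
    have ea : a ^ ((p:ℤ) ^ j * (u.val : ℤ)) = a ^ ((p:ℤ) ^ j * α₀) := by
      refine ca ?_
      rw [show (p:ℤ) ^ j * (u.val : ℤ) - (p:ℤ) ^ j * α₀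
        = -((p:ℤ) ^ j * (α₀ - (u.val : ℤ))) by ring, htα]
      exact dvd_neg.2 ⟨tα, by rw [← hpow_ej]; ring⟩
    have e1 : c ^ ((w.val : ℤ)) = c ^ (γ + (p:ℤ) ^ k * tβ) := cc hwd
    have e2 : b ^ ((p:ℤ) ^ j * β₀) = b ^ ((p:ℤ) ^ j * (v.val : ℤ)) * c ^ ((p:ℤ) ^ k * tβ) := by
      rw [show (p:ℤ) ^ j * β₀ = (p:ℤ) ^ j * (v.val : ℤ) + (p:ℤ) ^ i * tβ by
          linear_combination ((p:ℤ)) ^ j * htβ + tβ * hpow_ij,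
        zpow_add, zpow_mul b ((p:ℤ) ^ i) tβ, hb_pi, ← zpow_mul]
    have ebc : b ^ ((p:ℤ) ^ j * (v.val : ℤ)) * c ^ ((w.val : ℤ))
        = b ^ ((p:ℤ) ^ j * β₀) * c ^ γ := by
      rw [e1, e2, zpow_add c γ, mul_assoc]
      congr 1
      rw [← zpow_add, ← zpow_add, add_comm]
    show a ^ _ * (b ^ _ * c ^ _) = a ^ _ * (b ^ _ * c ^ _)
    rw [ea, ebc]
  have hcard : Nat.card (Subgroup.center G) = p ^ (e + i - j) := by
    rw [← Nat.card_congr (Equiv.ofBijective f ⟨hinj, hsurj⟩), Nat.card_prod, Nat.card_prod,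
      Nat.card_zmod, Nat.card_zmod, Nat.card_zmod, ← pow_add, ← pow_add]
    congr 1
    omega
  exact ⟨part1, hcard⟩


end Statements

end Beauville
end
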